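/- arXiv:1110.0058 — 7 statements merged into one kernel-verified Lean document; each statement's English description precedes it below -/
import Mathlib

section
/- If λ ∈ ℝ is a root of π_n, then the nonzero vector π(λ) = (π_0(λ), π_1(λ), …, π_{n−1}(λ)) ∈ ℝ^n satisfies J · π(λ) = λ · π(λ); that is, π(λ) is an eigenvector of the Jacobi matrix J with eigenvalue λ. -/
open MeasureTheory Polynomial

/-- if λ is a root of π_n then (π_0(λ),…,π_{n-1}(λ)) is a nonzero
eigenvector of the Jacobi matrix J with eigenvalue λ. -/
theorem jacobi_eigenvector_of_root
    (μ : Measure ℝ) [IsProbabilityMeasure μ]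
    (hmom : ∀ n : ℕ, Integrable (fun t : ℝ => t ^ n) μ)
    (ip : ℝ[X] → ℝ[X] → ℝ)
    (hip : ∀ p q : ℝ[X], ip p q = ∫ t, p.eval t * q.eval t ∂μ)
    (hpos : ∀ p : ℝ[X], p ≠ 0 → 0 < ip p p)
    (P : ℕ → ℝ[X])
    (hmonic : ∀ i : ℕ, (P i).Monic)
    (hdeg : ∀ i : ℕ, (P i).degree = i)
    (horth : ∀ i : ℕ, ∀ q : ℝ[X], q.degree < (i : ℕ) → ip (P i) q = 0)
    (π : ℕ → ℝ[X])
    (hπ : ∀ i : ℕ, π i = (Real.sqrt (ip (P i) (P i)))⁻¹ • P i)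
    (α : ℕ → ℝ) (hα : ∀ i : ℕ, α i = ip (X * π i) (π i))
    (β : ℕ → ℝ)
    (hβ : ∀ i : ℕ, 1 ≤ i → β i = ip (P i) (P i) / ip (P (i - 1)) (P (i - 1)))
    (n : ℕ) (hn : 1 ≤ n)
    (J : Matrix (Fin n) (Fin n) ℝ)
    (hJ : ∀ i j : Fin n, J i j =
      if i = j then α i.val
      else if i.val + 1 = j.val ∨ j.val + 1 = i.val then
        Real.sqrt (β (max i.val j.val))
      else 0)
    (lam : ℝ) (hroot : (π n).eval lam = 0) :
    (fun i : Fin n => (π i.val).eval lam) ≠ 0 ∧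
    J.mulVec (fun i : Fin n => (π i.val).eval lam) =
      lam • (fun i : Fin n => (π i.val).eval lam) := by
  -- integrability of polynomial functions
  have hint : ∀ p : ℝ[X], Integrable (fun t => p.eval t) μ := by
    intro p
    have h : (fun t : ℝ => p.eval t)
        = fun t => ∑ k ∈ Finset.range (p.natDegree + 1), p.coeff k * t ^ k := by
      funext t; rw [Polynomial.eval_eq_sum_range]
    rw [h]
    exact integrable_finset_sum _ (fun k _ => (hmom k).const_mul _)
  have hip' : ∀ p q : ℝ[X], ip p q = ∫ t, (p * q).eval t ∂μ := by
    intro p q; rw [hip]; simp [Polynomial.eval_mul]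
  have ipcomm : ∀ p q, ip p q = ip q p := by
    intro p q; rw [hip' p q, hip' q p, mul_comm]
  have ipsub : ∀ p q r : ℝ[X], ip (p - q) r = ip p r - ip q r := by
    intro p q r
    rw [hip', hip', hip', ← integral_sub (hint (p * r)) (hint (q * r))]
    congr 1; funext t; simp [sub_mul]
  have ipadd : ∀ p q r : ℝ[X], ip (p + q) r = ip p r + ip q r := by
    intro p q r
    rw [hip', hip', hip', ← integral_add (hint (p * r)) (hint (q * r))]
    congr 1; funext t; simp [add_mul]
  have ipC : ∀ (c : ℝ) (p q : ℝ[X]), ip (C c * p) q = c * ip p q := by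
    intro c p q
    rw [hip', hip', ← integral_const_mul]
    congr 1; funext t; simp [mul_assoc]
  have ipX : ∀ p q : ℝ[X], ip (X * p) q = ip p (X * q) := by
    intro p q
    rw [hip', hip']
    have : X * p * q = p * (X * q) := by ring
    rw [this]
  have Ppos : ∀ i, 0 < ip (P i) (P i) := fun i => hpos _ (hmonic i).ne_zero
  have orth' : ∀ i j : ℕ, i ≠ j → ip (P i) (P j) = 0 := by
    intro i j hij
    rcases Nat.lt_or_ge j i with h | h
    · exact horth i (P j) (by rw [hdeg]; exact_mod_cast h)
    · rw [ipcomm]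
      exact horth j (P i) (by rw [hdeg]; exact_mod_cast lt_of_le_of_ne h hij)
  -- a polynomial of degree < k orthogonal to P_0,…,P_{k-1} is zero
  have orth_zero : ∀ (k : ℕ) (r : ℝ[X]), r.degree < (k : ℕ) →
      (∀ j, j < k → ip r (P j) = 0) → r = 0 := by
    intro k r hdr hor
    by_contra hr
    set d := r.natDegree with hd
    have hdk : d < k := (Polynomial.natDegree_lt_iff_degree_lt hr).mpr hdr
    have hdegPd : (C r.leadingCoeff * P d).degree = r.degree := by
      rw [Polynomial.degree_C_mul (Polynomial.leadingCoeff_ne_zero.mpr hr), hdeg,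
        Polynomial.degree_eq_natDegree hr]
    have hlt : (r - C r.leadingCoeff * P d).degree < r.degree := by
      apply Polynomial.degree_sub_lt (hdegPd.symm) hr
      rw [Polynomial.leadingCoeff_mul, Polynomial.leadingCoeff_C, (hmonic d).leadingCoeff, mul_one]
    have h1 : ip (P d) (r - C r.leadingCoeff * P d) = 0 := by
      apply horth d
      calc (r - C r.leadingCoeff * P d).degree < r.degree := hlt
        _ = (d : ℕ) := by
          rw [Polynomial.degree_eq_natDegree hr]
    have h2 : ip (r - C r.leadingCoeff * P d) (P d)
        = ip r (P d) - r.leadingCoeff * ip (P d) (P d) := by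
      rw [ipsub, ipC]
    rw [ipcomm] at h1
    rw [h1, hor d hdk] at h2
    have := Ppos d
    have hlc := Polynomial.leadingCoeff_ne_zero.mpr hr
    have : r.leadingCoeff * ip (P d) (P d) ≠ 0 := mul_ne_zero hlc (ne_of_gt this)
    apply this
    linarith [h2]
  -- degree of X * P j
  have hXdeg : ∀ j : ℕ, (X * P j).degree = ((j + 1 : ℕ) : WithBot ℕ) := by
    intro j
    rw [Polynomial.degree_mul, Polynomial.degree_X, hdeg]
    push_cast
    ring
  -- α in terms of monic polynomials
  have hα' : ∀ i, α i = ip (X * P i) (P i) / ip (P i) (P i) := by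
    intro i
    set s := Real.sqrt (ip (P i) (P i)) with hs
    have hsq : s * s = ip (P i) (P i) := Real.mul_self_sqrt (le_of_lt (Ppos i))
    have hsne : s ≠ 0 := ne_of_gt (Real.sqrt_pos.mpr (Ppos i))
    rw [hα, hπ]
    rw [mul_smul_comm, Polynomial.smul_eq_C_mul, Polynomial.smul_eq_C_mul, ← hs, ipC]
    rw [ipcomm (X * P i), ipC, ipcomm (P i) (X * P i), ← hsq]
    field_simp
  have hCdeg : ∀ (c : ℝ) (p : ℝ[X]), (C c * p).degree ≤ p.degree := by
    intro c p
    calc (C c * p).degree ≤ (C c).degree + p.degree := Polynomial.degree_mul_le _ _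
      _ ≤ 0 + p.degree := add_le_add Polynomial.degree_C_le le_rfl
      _ = p.degree := zero_add _
  -- three-term recurrence, monic version
  have rec1 : ∀ i : ℕ, 1 ≤ i →
      X * P i = P (i + 1) + C (α i) * P i + C (β i) * P (i - 1) := by
    intro i hi
    have h := orth_zero (i + 1)
      (X * P i - (P (i + 1) + C (α i) * P i + C (β i) * P (i - 1))) ?_ ?_
    · linear_combination (norm := ring_nf) h
    · -- degree bound
      have h1 : (X * P i - P (i + 1)).degree < ((i + 1 : ℕ) : WithBot ℕ) := by
        calc (X * P i - P (i + 1)).degree < (X * P i).degree := by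
              apply Polynomial.degree_sub_lt
              · rw [hXdeg, hdeg]
              · exact (monic_X.mul (hmonic i)).ne_zero
              · rw [(monic_X.mul (hmonic i)).leadingCoeff, (hmonic (i + 1)).leadingCoeff]
          _ = ((i + 1 : ℕ) : WithBot ℕ) := hXdeg i
      have h2 : (C (α i) * P i).degree < ((i + 1 : ℕ) : WithBot ℕ) := by
        calc (C (α i) * P i).degree ≤ (P i).degree := hCdeg _ _
          _ = (i : ℕ) := hdeg i
          _ < ((i + 1 : ℕ) : WithBot ℕ) := by exact_mod_cast Nat.lt_succ_self i
      have h3 : (C (β i) * P (i - 1)).degree < ((i + 1 : ℕ) : WithBot ℕ) := by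
        calc (C (β i) * P (i - 1)).degree ≤ (P (i - 1)).degree := hCdeg _ _
          _ = ((i - 1 : ℕ) : WithBot ℕ) := hdeg _
          _ < ((i + 1 : ℕ) : WithBot ℕ) := by exact_mod_cast (by omega : i - 1 < i + 1)
      have : X * P i - (P (i + 1) + C (α i) * P i + C (β i) * P (i - 1))
          = (X * P i - P (i + 1)) - C (α i) * P i - C (β i) * P (i - 1) := by ring
      rw [this]
      refine lt_of_le_of_lt (Polynomial.degree_sub_le _ _) (max_lt ?_ h3)
      exact lt_of_le_of_lt (Polynomial.degree_sub_le _ _) (max_lt h1 h2)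
    · -- orthogonality
      intro j hj
      have expand : ip (X * P i - (P (i + 1) + C (α i) * P i + C (β i) * P (i - 1))) (P j)
          = ip (X * P i) (P j) - ip (P (i + 1)) (P j) - α i * ip (P i) (P j)
            - β i * ip (P (i - 1)) (P j) := by
        rw [ipsub, ipadd, ipadd, ipC, ipC]; ring
      rw [expand]
      have hip1 : ip (P (i + 1)) (P j) = 0 := orth' _ _ (by omega)
      rcases Nat.lt_trichotomy j (i - 1) with hlt | heq | hgt
      · -- j < i - 1
        have hx : ip (X * P i) (P j) = 0 := by
          rw [ipX, ipcomm]
          exact ipcomm _ _ ▸ horth i (X * P j) (by rw [hXdeg]; exact_mod_cast (by omega : j + 1 < i))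
        rw [hx, hip1, orth' i j (by omega), orth' (i - 1) j (by omega)]
        ring
      · -- j = i - 1
        subst heq
        have hs : (X * P (i - 1) - P i).degree < ((i : ℕ) : WithBot ℕ) := by
          calc (X * P (i - 1) - P i).degree < (X * P (i - 1)).degree := by
                apply Polynomial.degree_sub_lt
                · rw [hXdeg, hdeg]; congr 1; omega
                · exact (monic_X.mul (hmonic _)).ne_zero
                · rw [(monic_X.mul (hmonic _)).leadingCoeff, (hmonic i).leadingCoeff]
            _ = (((i - 1) + 1 : ℕ) : WithBot ℕ) := hXdeg _
            _ = ((i : ℕ) : WithBot ℕ) := by congr 1; omega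
        have hx : ip (X * P i) (P (i - 1)) = ip (P i) (P i) := by
          rw [ipX]
          have : X * P (i - 1) = P i + (X * P (i - 1) - P i) := by ring
          rw [this, ipcomm, ipadd, ipcomm (P i) (P i)]
          rw [ipcomm (X * P (i - 1) - P i) (P i), horth i _ hs]
          ring
        have hb : β i * ip (P (i - 1)) (P (i - 1)) = ip (P i) (P i) := by
          rw [hβ i hi, div_mul_eq_mul_div]
          exact mul_div_cancel_right₀ _ (ne_of_gt (Ppos (i - 1)))
        rw [hx, hip1, orth' i (i - 1) (by omega), hb]
        ring
      · -- j = i  (since j < i + 1 and j > i - 1)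
        have hji : j = i := by omega
        subst hji
        have hx : α j * ip (P j) (P j) = ip (X * P j) (P j) := by
          rw [hα']
          exact div_mul_cancel₀ _ (ne_of_gt (Ppos j))
        rw [hip1, orth' (j - 1) j (by omega), ← hx]
        ring
  have rec0 : X * P 0 = P 1 + C (α 0) * P 0 := by
    have h := orth_zero 1 (X * P 0 - (P 1 + C (α 0) * P 0)) ?_ ?_
    · linear_combination (norm := ring_nf) h
    · have h1 : (X * P 0 - P 1).degree < ((1 : ℕ) : WithBot ℕ) := by
        calc (X * P 0 - P 1).degree < (X * P 0).degree := by
              apply Polynomial.degree_sub_lt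
              · rw [hXdeg, hdeg]
              · exact (monic_X.mul (hmonic 0)).ne_zero
              · rw [(monic_X.mul (hmonic 0)).leadingCoeff, (hmonic 1).leadingCoeff]
          _ = ((1 : ℕ) : WithBot ℕ) := hXdeg 0
      have h2 : (C (α 0) * P 0).degree < ((1 : ℕ) : WithBot ℕ) := by
        calc (C (α 0) * P 0).degree ≤ (P 0).degree := hCdeg _ _
          _ = ((0 : ℕ) : WithBot ℕ) := hdeg 0
          _ < ((1 : ℕ) : WithBot ℕ) := by exact_mod_cast Nat.zero_lt_one
      have : X * P 0 - (P 1 + C (α 0) * P 0) = (X * P 0 - P 1) - C (α 0) * P 0 := by ring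
      rw [this]
      exact lt_of_le_of_lt (Polynomial.degree_sub_le _ _) (max_lt h1 h2)
    · intro j hj
      interval_cases j
      have expand : ip (X * P 0 - (P 1 + C (α 0) * P 0)) (P 0)
          = ip (X * P 0) (P 0) - ip (P 1) (P 0) - α 0 * ip (P 0) (P 0) := by
        rw [ipsub, ipadd, ipC]; ring
      rw [expand, orth' 1 0 (by omega)]
      have hx : α 0 * ip (P 0) (P 0) = ip (X * P 0) (P 0) := by
        rw [hα']; exact div_mul_cancel₀ _ (ne_of_gt (Ppos 0))
      rw [← hx]; ring
  -- scalar facts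
  have hspos : ∀ i, 0 < Real.sqrt (ip (P i) (P i)) := fun i => Real.sqrt_pos.mpr (Ppos i)
  have hv : ∀ k : ℕ, (π k).eval lam = (Real.sqrt (ip (P k) (P k)))⁻¹ * (P k).eval lam := by
    intro k; rw [hπ, Polynomial.smul_eq_C_mul, Polynomial.eval_mul, Polynomial.eval_C]
  have hβpos : ∀ i, 1 ≤ i → 0 < β i := by
    intro i hi; rw [hβ i hi]; exact div_pos (Ppos i) (Ppos _)
  have hsqβ : ∀ i : ℕ, 1 ≤ i →
      Real.sqrt (β i) * Real.sqrt (ip (P (i - 1)) (P (i - 1)))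
        = Real.sqrt (ip (P i) (P i)) := by
    intro i hi
    rw [hβ i hi, Real.sqrt_div (le_of_lt (Ppos i))]
    exact div_mul_cancel₀ _ (ne_of_gt (hspos (i - 1)))
  -- key scalar identity for k ≥ 1
  have key : ∀ k : ℕ, 1 ≤ k → lam * (π k).eval lam
      = Real.sqrt (β (k + 1)) * (π (k + 1)).eval lam + α k * (π k).eval lam
        + Real.sqrt (β k) * (π (k - 1)).eval lam := by
    intro k hk
    have e := congrArg (Polynomial.eval lam) (rec1 k hk)
    simp only [Polynomial.eval_mul, Polynomial.eval_add, Polynomial.eval_C,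
      Polynomial.eval_X] at e
    rw [hv, hv, hv]
    set s0 := Real.sqrt (ip (P (k - 1)) (P (k - 1))) with hs0
    set s1 := Real.sqrt (ip (P k) (P k)) with hs1
    set s2 := Real.sqrt (ip (P (k + 1)) (P (k + 1))) with hs2
    have h1 : Real.sqrt (β (k + 1)) * s1 = s2 := by
      have := hsqβ (k + 1) (by omega); simpa using this
    have h2 : Real.sqrt (β k) * s0 = s1 := hsqβ k hk
    have hb : Real.sqrt (β k) * Real.sqrt (β k) = β k :=
      Real.mul_self_sqrt (le_of_lt (hβpos k hk))
    have hb1pos : (0:ℝ) < Real.sqrt (β (k + 1)) := Real.sqrt_pos.mpr (hβpos (k + 1) (by omega))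
    have hbkpos : (0:ℝ) < Real.sqrt (β k) := Real.sqrt_pos.mpr (hβpos k hk)
    have h0p : 0 < s0 := hspos _
    rw [← h1, ← h2]
    field_simp
    linear_combination e - Polynomial.eval lam (P (k - 1)) * hb
  have key0 : lam * (π 0).eval lam
      = Real.sqrt (β 1) * (π 1).eval lam + α 0 * (π 0).eval lam := by
    have e := congrArg (Polynomial.eval lam) rec0
    simp only [Polynomial.eval_mul, Polynomial.eval_add, Polynomial.eval_C,
      Polynomial.eval_X] at e
    rw [hv, hv]
    set s0 := Real.sqrt (ip (P 0) (P 0)) with hs0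
    set s1 := Real.sqrt (ip (P 1) (P 1)) with hs1
    have h1 : Real.sqrt (β 1) * s0 = s1 := by
      have := hsqβ 1 (by omega); simpa using this
    have hb1pos : (0:ℝ) < Real.sqrt (β 1) := Real.sqrt_pos.mpr (hβpos 1 (by omega))
    have h0p : 0 < s0 := hspos _
    rw [← h1]
    field_simp
    linear_combination e
  -- P 0 = 1 and first coordinate nonzero
  have hP0 : P 0 = 1 := by
    have h0 : (P 0).natDegree = 0 := natDegree_eq_of_degree_eq_some (hdeg 0)
    have hc := Polynomial.eq_C_of_natDegree_eq_zero h0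
    have hm := hmonic 0
    rw [Polynomial.Monic, Polynomial.leadingCoeff, h0] at hm
    rw [hc, hm]; simp
  have hv0 : (π 0).eval lam ≠ 0 := by
    have h1 : (P 0).eval lam = 1 := by rw [hP0]; simp
    rw [hv, h1, mul_one]
    exact ne_of_gt (inv_pos.mpr (hspos 0))
  constructor
  · intro hzero
    have := congrFun hzero ⟨0, hn⟩
    exact hv0 this
  · funext i
    have hk : (i : ℕ) < n := i.isLt
    have hmv : J.mulVec (fun j : Fin n => (π j.val).eval lam) i
        = ∑ j : Fin n, J i j * (π j.val).eval lam := by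
      simp [Matrix.mulVec, dotProduct]
    have hsmul : (lam • (fun j : Fin n => (π j.val).eval lam)) i
        = lam * (π i.val).eval lam := rfl
    rw [hmv, hsmul]
    -- pointwise decomposition of the row
    have hJ' : ∀ j : Fin n, J i j * (π j.val).eval lam =
        (if (j : ℕ) = (i : ℕ) then α i.val * (π i.val).eval lam else 0)
        + (if (j : ℕ) = (i : ℕ) + 1 then
            Real.sqrt (β ((i : ℕ) + 1)) * (π ((i : ℕ) + 1)).eval lam else 0)
        + (if (j : ℕ) + 1 = (i : ℕ) then
            Real.sqrt (β (i : ℕ)) * (π ((i : ℕ) - 1)).eval lam else 0) := by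
      intro j
      rw [hJ]
      by_cases e1 : i = j
      · subst e1
        rw [if_pos rfl, if_pos rfl, if_neg (by omega : ¬((i:ℕ) = (i:ℕ) + 1)),
          if_neg (by omega : ¬((i:ℕ) + 1 = (i:ℕ)))]
        ring
      · rw [if_neg e1]
        have e1' : (i : ℕ) ≠ (j : ℕ) := fun h => e1 (Fin.ext h)
        by_cases e2 : (i:ℕ) + 1 = (j:ℕ)
        · rw [if_pos (Or.inl e2)]
          have hmax : max (i:ℕ) (j:ℕ) = (i:ℕ) + 1 := by omega
          rw [hmax, if_neg (by omega : ¬((j:ℕ) = (i:ℕ))), if_pos e2.symm,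
            if_neg (by omega : ¬((j:ℕ) + 1 = (i:ℕ))), ← e2]
          ring
        · by_cases e3 : (j:ℕ) + 1 = (i:ℕ)
          · rw [if_pos (Or.inr e3)]
            have hmax : max (i:ℕ) (j:ℕ) = (i:ℕ) := by omega
            have hj1 : (j : ℕ) = (i:ℕ) - 1 := by omega
            rw [hmax, if_neg (by omega : ¬((j:ℕ) = (i:ℕ))),
              if_neg (by omega : ¬((j:ℕ) = (i:ℕ) + 1)), if_pos e3, hj1]
            ring
          · rw [if_neg (by tauto : ¬((i:ℕ) + 1 = (j:ℕ) ∨ (j:ℕ) + 1 = (i:ℕ))),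
              if_neg (by omega : ¬((j:ℕ) = (i:ℕ))),
              if_neg (by omega : ¬((j:ℕ) = (i:ℕ) + 1)), if_neg e3]
            ring
    rw [Finset.sum_congr rfl (fun j _ => hJ' j), Finset.sum_add_distrib,
      Finset.sum_add_distrib]
    have conv1 : ∀ (a : ℕ) (c : ℝ), (∑ j : Fin n, if (j : ℕ) = a then c else 0)
        = if a < n then c else 0 := by
      intro a c
      rw [Fin.sum_univ_eq_sum_range (fun m => if m = a then c else 0) n,
        Finset.sum_ite_eq' (Finset.range n) a (fun _ => c)]
      simp [Finset.mem_range]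
    have conv3 : ∀ (c : ℝ), (∑ j : Fin n, if (j : ℕ) + 1 = (i : ℕ) then c else 0)
        = if 1 ≤ (i : ℕ) then c else 0 := by
      intro c
      by_cases hi0 : (i : ℕ) = 0
      · simp [hi0]
      · have hcond : ∀ m : ℕ, (m + 1 = (i:ℕ)) = (m = (i:ℕ) - 1) := by
          intro m; simp only [eq_iff_iff]; omega
        simp_rw [hcond]
        rw [conv1]
        rw [if_pos (by omega : (i:ℕ) - 1 < n), if_pos (by omega : 1 ≤ (i:ℕ))]
    rw [conv1, conv1, conv3, if_pos hk]
    have h2 : (if (i:ℕ) + 1 < n then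
        Real.sqrt (β ((i : ℕ) + 1)) * (π ((i : ℕ) + 1)).eval lam else 0)
        = Real.sqrt (β ((i : ℕ) + 1)) * (π ((i : ℕ) + 1)).eval lam := by
      split_ifs with h
      · rfl
      · have : (i : ℕ) + 1 = n := by omega
        rw [this, hroot, mul_zero]
    rw [h2]
    by_cases hi0 : (i : ℕ) = 0
    · rw [if_neg (by omega), hi0]
      linarith [key0]
    · rw [if_pos (by omega : 1 ≤ (i:ℕ))]
      linarith [key (i : ℕ) (by omega)]
end

section
/- A real number λ is an eigenvalue of the n×n Jacobi matrix J if and only if π_n(λ) = 0; that is, the zeros of π_n are exactly the eigenvalues of J. -/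
set_option linter.unusedSectionVars false
set_option maxHeartbeats 1000000

open MeasureTheory Polynomial

section JacobiAux
variable (mu : Measure ℝ) [IsProbabilityMeasure mu]
  (hmom : ∀ n : ℕ, Integrable (fun t : ℝ => t ^ n) mu)
  (ip : ℝ[X] → ℝ[X] → ℝ)
  (hip : ∀ p q : ℝ[X], ip p q = ∫ t, p.eval t * q.eval t ∂mu)
  (hpos : ∀ p : ℝ[X], p ≠ 0 → 0 < ip p p)
  (P : ℕ → ℝ[X]) (hmonic : ∀ i : ℕ, (P i).Monic) (hdeg : ∀ i : ℕ, (P i).degree = i)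
  (horth : ∀ i : ℕ, ∀ q : ℝ[X], q.degree < (i : ℕ) → ip (P i) q = 0)

include hmom in
lemma jac_int (p : ℝ[X]) : Integrable (fun t => p.eval t) mu := by
  have h : (fun t : ℝ => p.eval t) = fun t => ∑ i ∈ Finset.range (p.natDegree + 1), p.coeff i * t ^ i := by
    funext t; rw [Polynomial.eval_eq_sum_range]
  rw [h]
  exact integrable_finset_sum _ fun i _ => (hmom i).const_mul _

include hmom in
lemma jac_int_mul (p q : ℝ[X]) : Integrable (fun t => p.eval t * q.eval t) mu := by
  have := jac_int mu hmom (p * q)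
  simpa only [eval_mul] using this

include hmom hip in
lemma ip_add_right' (p q r : ℝ[X]) : ip p (q + r) = ip p q + ip p r := by
  rw [hip, hip, hip, ← integral_add (jac_int_mul mu hmom p q) (jac_int_mul mu hmom p r)]
  simp [mul_add]

include hip in
lemma ip_smul_right' (c : ℝ) (p q : ℝ[X]) : ip p (c • q) = c * ip p q := by
  rw [hip, hip, ← integral_const_mul _ _]
  congr 1; funext t; simp; ring

include hip in
lemma ip_comm' (p q : ℝ[X]) : ip p q = ip q p := by
  rw [hip, hip]; simp [mul_comm]

include hmom hip in
lemma ip_sub_left' (p q r : ℝ[X]) : ip (p - q) r = ip p r - ip q r := by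
  rw [hip, hip, hip, ← integral_sub (jac_int_mul mu hmom p r) (jac_int_mul mu hmom q r)]
  simp [sub_mul]

include hmom hip in
lemma ip_sub_right' (p q r : ℝ[X]) : ip p (q - r) = ip p q - ip p r := by
  rw [hip, hip, hip, ← integral_sub (jac_int_mul mu hmom p q) (jac_int_mul mu hmom p r)]
  simp [mul_sub]

include hip in
lemma ip_zero_right' (p : ℝ[X]) : ip p 0 = 0 := by rw [hip]; simp

include hip in
lemma ip_X_shift' (p q : ℝ[X]) : ip (X * p) q = ip p (X * q) := by
  rw [hip, hip]; congr 1; funext t; simp; ring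

include hip in
lemma ip_C_mul_left' (c : ℝ) (p q : ℝ[X]) : ip (C c * p) q = c * ip p q := by
  rw [hip, hip, ← integral_const_mul _ _]
  congr 1; funext t; simp; ring

include hip in
lemma ip_smul_left' (c : ℝ) (p q : ℝ[X]) : ip (c • p) q = c * ip p q := by
  rw [hip, hip, ← integral_const_mul _ _]
  congr 1; funext t; simp; ring

include hpos hmonic in
lemma s_pos' (i : ℕ) : 0 < ip (P i) (P i) := hpos _ (hmonic i).ne_zero

include hdeg horth in
lemma horth2 (a b : ℕ) (hab : b < a) : ip (P a) (P b) = 0 :=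
  horth a (P b) (by rw [hdeg b]; exact_mod_cast hab)

include hdeg in
lemma hXdeg' (k : ℕ) : (X * P k).degree = ((k+1 : ℕ) : WithBot ℕ) := by
  rw [degree_mul, degree_X, hdeg k]
  rw [show ((k+1 : ℕ) : WithBot ℕ) = ((1 : ℕ) : WithBot ℕ) + ((k : ℕ) : WithBot ℕ) by
    push_cast; ring]
  norm_num

lemma degle_of_lt_succ {p : ℝ[X]} {k : ℕ} (h : p.degree < ((k+1:ℕ) : WithBot ℕ)) :
    p.degree ≤ (k : ℕ) := by
  rcases eq_or_ne p 0 with h0 | h0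
  · simp [h0]
  · rw [degree_eq_natDegree h0] at h ⊢
    exact_mod_cast Nat.lt_succ_iff.mp (by exact_mod_cast h)

include hmom hip hmonic hdeg in
lemma ortho_low (r : ℝ[X]) (m : ℕ) (hr : ∀ j, j ≤ m → ip r (P j) = 0) :
    ∀ q : ℝ[X], q.degree ≤ m → ip r q = 0 := by
  suffices H : ∀ d, ∀ q : ℝ[X], q.natDegree < d → q.degree ≤ m → ip r q = 0 by
    exact fun q hq => H (q.natDegree + 1) q (Nat.lt_succ_self _) hq
  intro d
  induction d with
  | zero => intro q h; exact absurd h (Nat.not_lt_zero _)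
  | succ d ih =>
    intro q hqd hqm
    by_cases hq0 : q = 0
    · rw [hq0]; exact ip_zero_right' mu ip hip r
    · have he : q.natDegree ≤ m := natDegree_le_iff_degree_le.mpr hqm
      set e := q.natDegree with hedef
      have hc : q.leadingCoeff ≠ 0 := leadingCoeff_ne_zero.mpr hq0
      have hdegsm : (q.leadingCoeff • P e).degree = q.degree := by
        rw [smul_eq_C_mul, degree_mul, degree_C hc, hdeg e, zero_add,
          degree_eq_natDegree hq0]
      have hlcsm : (q.leadingCoeff • P e).leadingCoeff = q.leadingCoeff := by
        rw [smul_eq_C_mul, leadingCoeff_mul, leadingCoeff_C, (hmonic e).leadingCoeff, mul_one]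
      set q' := q - q.leadingCoeff • P e with hq'
      have hiq : ip r q = ip r q' + q.leadingCoeff * ip r (P e) := by
        rw [hq', ip_sub_right' mu hmom ip hip, ip_smul_right' mu ip hip]; ring
      rw [hiq, hr e he, mul_zero, add_zero]
      by_cases hq'0 : q' = 0
      · rw [hq'0]; exact ip_zero_right' mu ip hip r
      · have hlt : q'.degree < q.degree := degree_sub_lt hdegsm.symm hq0 hlcsm.symm
        refine ih q' ?_ (le_trans (le_of_lt hlt) hqm)
        have h2 : q'.natDegree < q.natDegree := natDegree_lt_natDegree hq'0 hlt
        omega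

include hmom hip hpos hmonic hdeg horth in
lemma monic_rec (β : ℕ → ℝ)
    (hβ : ∀ i : ℕ, 1 ≤ i → β i = ip (P i) (P i) / ip (P (i - 1)) (P (i - 1)))
    (i : ℕ) (hi : 1 ≤ i) :
    P (i+1) = (X - C (ip (X * P i) (P i) / ip (P i) (P i))) * P i - C (β i) * P (i-1) := by
  set A := ip (X * P i) (P i) / ip (P i) (P i) with hA
  set Q := X * P i - P (i+1) - C A * P i - C (β i) * P (i-1) with hQdef
  have hd1 : (X * P i).degree = (P (i+1)).degree := by
    rw [hXdeg' P hdeg i, hdeg (i+1)]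
  have hlc1 : (X * P i).leadingCoeff = (P (i+1)).leadingCoeff := by
    rw [(monic_X.mul (hmonic i)).leadingCoeff, (hmonic (i+1)).leadingCoeff]
  have hXne : X * P i ≠ 0 := (monic_X.mul (hmonic i)).ne_zero
  have h1 : (X * P i - P (i+1)).degree < ((i+1 : ℕ) : WithBot ℕ) := by
    have h := degree_sub_lt hd1 hXne hlc1
    rwa [hXdeg' P hdeg i] at h
  have hQdeg : Q.degree ≤ (i : ℕ) := by
    rw [hQdef]
    refine le_trans (degree_sub_le _ _) (max_le (le_trans (degree_sub_le _ _) (max_le ?_ ?_)) ?_)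
    · exact degle_of_lt_succ h1
    · calc (C A * P i).degree ≤ (C A).degree + (P i).degree := degree_mul_le _ _
        _ ≤ 0 + (i : WithBot ℕ) := add_le_add degree_C_le (hdeg i).le
        _ = (i : WithBot ℕ) := zero_add _
    · calc (C (β i) * P (i-1)).degree ≤ (C (β i)).degree + (P (i-1)).degree := degree_mul_le _ _
        _ ≤ 0 + ((i-1 : ℕ) : WithBot ℕ) := add_le_add degree_C_le (hdeg (i-1)).le
        _ ≤ (i : WithBot ℕ) := by rw [zero_add]; exact_mod_cast Nat.sub_le i 1
  have hkey : ∀ j, j ≤ i → ip Q (P j) = 0 := by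
    intro j hj
    have hexp : ip Q (P j) = ip (X * P i) (P j) - ip (P (i+1)) (P j)
        - A * ip (P i) (P j) - β i * ip (P (i-1)) (P j) := by
      rw [hQdef, ip_sub_left' mu hmom ip hip, ip_sub_left' mu hmom ip hip,
        ip_sub_left' mu hmom ip hip, ip_C_mul_left' mu ip hip, ip_C_mul_left' mu ip hip]
    have h2 : ip (P (i+1)) (P j) = 0 := horth2 ip P hdeg horth (i+1) j (by omega)
    rcases (show j + 2 ≤ i ∨ j + 1 = i ∨ j = i by omega) with hc | hc | hc
    · have ha : ip (X * P i) (P j) = 0 := by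
        rw [ip_X_shift' mu ip hip]
        exact horth i (X * P j) (by
          rw [hXdeg' P hdeg j]; exact_mod_cast (by omega : j + 1 < i))
      have hb : ip (P i) (P j) = 0 := horth2 ip P hdeg horth i j (by omega)
      have hcc : ip (P (i-1)) (P j) = 0 := horth2 ip P hdeg horth (i-1) j (by omega)
      rw [hexp, ha, hb, hcc, h2]; ring
    · have hdd : (X * P j).degree = (P i).degree := by
        rw [hXdeg' P hdeg j, hdeg i, hc]
      have hXPjne : X * P j ≠ 0 := (monic_X.mul (hmonic j)).ne_zero
      have hlc : (X * P j).leadingCoeff = (P i).leadingCoeff := by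
        rw [(monic_X.mul (hmonic j)).leadingCoeff, (hmonic i).leadingCoeff]
      have hsub : ip (P i) (X * P j - P i) = 0 := by
        refine horth i _ ?_
        have h := degree_sub_lt hdd hXPjne hlc
        rwa [hXdeg' P hdeg j, hc] at h
      have ha : ip (X * P i) (P j) = ip (P i) (P i) := by
        rw [ip_X_shift' mu ip hip]
        have h3 := ip_sub_right' mu hmom ip hip (P i) (X * P j) (P i)
        rw [hsub] at h3
        linarith
      have hb : ip (P i) (P j) = 0 := horth2 ip P hdeg horth i j (by omega)
      have hcc : ip (P (i-1)) (P j) = ip (P j) (P j) := by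
        rw [show i - 1 = j by omega]
      have hsj : 0 < ip (P j) (P j) := s_pos' ip hpos P hmonic j
      have hβi : β i * ip (P j) (P j) = ip (P i) (P i) := by
        rw [hβ i hi, show i - 1 = j by omega]
        field_simp
      rw [hexp, ha, hb, hcc, h2]
      linarith
    · subst hc
      have hb : ip (P (j-1)) (P j) = 0 := by
        rw [ip_comm' mu ip hip]
        exact horth2 ip P hdeg horth j (j-1) (by omega)
      have hsj : 0 < ip (P j) (P j) := s_pos' ip hpos P hmonic j
      have hAs : A * ip (P j) (P j) = ip (X * P j) (P j) := by
        rw [hA]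
        field_simp
      rw [hexp, hb, h2, hAs]; ring
  have hQ0 : Q = 0 := by
    by_contra h
    have hp1 := hpos Q h
    have hp2 : ip Q Q = 0 :=
      ortho_low mu hmom ip hip P hmonic hdeg Q i hkey Q hQdeg
    linarith
  rw [hQdef] at hQ0
  linear_combination -hQ0

include hmom hip hpos hmonic hdeg horth in
lemma monic_rec0 :
    P 1 = (X - C (ip (X * P 0) (P 0) / ip (P 0) (P 0))) * P 0 := by
  set A := ip (X * P 0) (P 0) / ip (P 0) (P 0) with hA
  set Q := X * P 0 - P 1 - C A * P 0 with hQdef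
  have hd1 : (X * P 0).degree = (P 1).degree := by
    rw [hXdeg' P hdeg 0, hdeg 1]
  have hlc1 : (X * P 0).leadingCoeff = (P 1).leadingCoeff := by
    rw [(monic_X.mul (hmonic 0)).leadingCoeff, (hmonic 1).leadingCoeff]
  have hXne : X * P 0 ≠ 0 := (monic_X.mul (hmonic 0)).ne_zero
  have h1 : (X * P 0 - P 1).degree < ((0+1 : ℕ) : WithBot ℕ) := by
    have h := degree_sub_lt hd1 hXne hlc1
    rwa [hXdeg' P hdeg 0] at h
  have hQdeg : Q.degree ≤ ((0 : ℕ) : WithBot ℕ) := by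
    rw [hQdef]
    refine le_trans (degree_sub_le _ _) (max_le ?_ ?_)
    · exact degle_of_lt_succ h1
    · calc (C A * P 0).degree ≤ (C A).degree + (P 0).degree := degree_mul_le _ _
        _ ≤ 0 + ((0:ℕ) : WithBot ℕ) := add_le_add degree_C_le (hdeg 0).le
        _ = ((0:ℕ) : WithBot ℕ) := zero_add _
  have hkey : ∀ j, j ≤ 0 → ip Q (P j) = 0 := by
    intro j hj
    have hj0 : j = 0 := by omega
    subst hj0
    have hexp : ip Q (P 0) = ip (X * P 0) (P 0) - ip (P 1) (P 0)
        - A * ip (P 0) (P 0) := by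
      rw [hQdef, ip_sub_left' mu hmom ip hip, ip_sub_left' mu hmom ip hip,
        ip_C_mul_left' mu ip hip]
    have h2 : ip (P 1) (P 0) = 0 := horth2 ip P hdeg horth 1 0 (by omega)
    have hs0 : 0 < ip (P 0) (P 0) := s_pos' ip hpos P hmonic 0
    have hAs : A * ip (P 0) (P 0) = ip (X * P 0) (P 0) := by
      rw [hA]; field_simp
    rw [hexp, h2, hAs]; ring
  have hQ0 : Q = 0 := by
    by_contra h
    have hp1 := hpos Q h
    have hp2 : ip Q Q = 0 :=
      ortho_low mu hmom ip hip P hmonic hdeg Q 0 hkey Q hQdeg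
    linarith
  rw [hQdef] at hQ0
  linear_combination -hQ0

include hmom hip hpos hmonic hdeg horth in
lemma scalar_rec (pii : ℕ → ℝ[X])
    (hπ : ∀ i : ℕ, pii i = (Real.sqrt (ip (P i) (P i)))⁻¹ • P i)
    (α : ℕ → ℝ) (hα : ∀ i : ℕ, α i = ip (X * pii i) (pii i))
    (β : ℕ → ℝ)
    (hβ : ∀ i : ℕ, 1 ≤ i → β i = ip (P i) (P i) / ip (P (i - 1)) (P (i - 1)))
    (lam : ℝ) :
    (∀ k, 1 ≤ k → 0 < β k) ∧ 0 < (pii 0).eval lam ∧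
    (∀ k : ℕ, Real.sqrt (β (k+1)) * (pii (k+1)).eval lam
      = (lam - α k) * (pii k).eval lam
        - (if 1 ≤ k then Real.sqrt (β k) * (pii (k-1)).eval lam else 0)) := by
  have hs : ∀ k, 0 < ip (P k) (P k) := s_pos' ip hpos P hmonic
  set u : ℕ → ℝ := fun k => Real.sqrt (ip (P k) (P k)) with hu_def
  have hu : ∀ k, 0 < u k := fun k => Real.sqrt_pos.mpr (hs k)
  have hu2 : ∀ k, u k ^ 2 = ip (P k) (P k) := fun k => Real.sq_sqrt (hs k).le
  have hβpos : ∀ k, 1 ≤ k → 0 < β k := fun k hk => by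
    rw [hβ k hk]; exact div_pos (hs k) (hs (k-1))
  have hp : ∀ k, (pii k).eval lam = (u k)⁻¹ * (P k).eval lam := by
    intro k; rw [hπ k]; simp; exact Or.inl rfl
  have hb : ∀ k, 1 ≤ k → Real.sqrt (β k) = u k / u (k-1) := by
    intro k hk; rw [hβ k hk, Real.sqrt_div (hs k).le]
  have halpha : ∀ k, α k = ip (X * P k) (P k) / ip (P k) (P k) := by
    intro k
    rw [hα k, hπ k, mul_smul_comm, ip_smul_left' mu ip hip, ip_smul_right' mu ip hip,
      ← hu2 k]
    rw [eq_div_iff (pow_ne_zero 2 (hu k).ne'), pow_two]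
    field_simp
    rw [Real.sqrt_sq (hu k).le]; field_simp [(hu k).ne']
  have hev0 : (P 0).eval lam = 1 := by
    rw [(hmonic 0).degree_le_zero_iff_eq_one.mp (by rw [hdeg 0]; norm_num)]
    simp
  have hπ0 : 0 < (pii 0).eval lam := by
    rw [hp 0, hev0, mul_one]
    exact inv_pos.mpr (hu 0)
  refine ⟨hβpos, hπ0, ?_⟩
  intro k
  by_cases hk : 1 ≤ k
  · have hrec := monic_rec mu hmom ip hip hpos P hmonic hdeg horth β hβ k hk
    have he := congrArg (fun q : ℝ[X] => q.eval lam) hrec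
    simp only [eval_mul, eval_sub, eval_C, eval_X] at he
    rw [← halpha k] at he
    have hβk : β k = u k ^ 2 / u (k-1) ^ 2 := by rw [hβ k hk, hu2, hu2]
    have hbk1 : Real.sqrt (β (k+1)) = u (k+1) / u k := by
      rw [hb (k+1) (by omega)]; norm_num
    rw [if_pos hk, hbk1, hb k hk, hp (k+1), hp k, hp (k-1)]
    rw [he, hβk]
    have h1 := (hu k).ne'
    have h2 := (hu (k+1)).ne'
    have h3 := (hu (k-1)).ne'
    field_simp
  · have hk0 : k = 0 := by omega
    subst hk0
    have hrec := monic_rec0 mu hmom ip hip hpos P hmonic hdeg horth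
    have he := congrArg (fun q : ℝ[X] => q.eval lam) hrec
    simp only [eval_mul, eval_sub, eval_C, eval_X] at he
    rw [← halpha 0] at he
    have hβk : β 1 = u 1 ^ 2 / u 0 ^ 2 := by rw [hβ 1 le_rfl, hu2, hu2]
    have hbk1 : Real.sqrt (β 1) = u 1 / u 0 := by
      rw [hb 1 le_rfl]
    rw [if_neg (by omega), hbk1, hp 1, hp 0]
    rw [he]
    have h1 := (hu 0).ne'
    have h2 := (hu 1).ne'
    field_simp
    ring

end JacobiAux

lemma fin_sum_ite (n k : ℕ) (g : Fin n → ℝ) :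
    ∑ j : Fin n, (if (j : ℕ) = k then g j else 0) = if h : k < n then g ⟨k, h⟩ else 0 := by
  split
  · next h =>
    have : ∀ j : Fin n, (if (j : ℕ) = k then g j else 0) = if j = ⟨k, h⟩ then g j else 0 := by
      intro j
      congr 1
      simp [Fin.ext_iff]
    rw [Finset.sum_congr rfl fun j _ => this j, Finset.sum_ite_eq' Finset.univ (⟨k, h⟩ : Fin n) g]
    simp
  · next h =>
    refine Finset.sum_eq_zero fun j _ => if_neg ?_
    have := j.isLt
    omega

lemma tridiag_mulVec (n : ℕ) (α' b' : ℕ → ℝ)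
    (J : Matrix (Fin n) (Fin n) ℝ)
    (hJ : ∀ i j : Fin n, J i j =
      if i = j then α' i.val
      else if i.val + 1 = j.val ∨ j.val + 1 = i.val then b' (max i.val j.val) else 0)
    (v : Fin n → ℝ) (i : Fin n) :
    J.mulVec v i =
      (if 1 ≤ (i:ℕ) then (if h : (i:ℕ)-1 < n then b' i.val * v ⟨(i:ℕ)-1, h⟩ else 0) else 0)
      + α' i.val * v i
      + (if h : (i:ℕ)+1 < n then b' ((i:ℕ)+1) * v ⟨(i:ℕ)+1, h⟩ else 0) := by
  have hsplit : ∀ j : Fin n, J i j * v j =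
      (if (j:ℕ) = (i:ℕ) then α' i.val * v j else 0)
      + (if (j:ℕ) = (i:ℕ)+1 then b' ((i:ℕ)+1) * v j else 0)
      + (if 1 ≤ (i:ℕ) then (if (j:ℕ) = (i:ℕ)-1 then b' i.val * v j else 0) else 0) := by
    intro j
    rw [hJ i j]
    by_cases h1 : (j:ℕ) = (i:ℕ)
    · rw [if_pos (Fin.ext h1.symm : i = j), if_pos h1, if_neg (by omega)]
      by_cases hi1 : 1 ≤ (i:ℕ)
      · rw [if_pos hi1, if_neg (by omega)]; ring
      · rw [if_neg hi1]; ring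
    · rw [if_neg (fun hh : i = j => h1 (by rw [hh]))]
      by_cases h2 : (j:ℕ) = (i:ℕ)+1
      · rw [if_pos (Or.inl h2.symm), show max (i:ℕ) (j:ℕ) = (i:ℕ)+1 by
          rw [max_eq_right (by omega), h2], if_neg h1, if_pos h2]
        by_cases hi1 : 1 ≤ (i:ℕ)
        · rw [if_pos hi1, if_neg (by omega)]; ring
        · rw [if_neg hi1]; ring
      · by_cases h3 : (j:ℕ)+1 = (i:ℕ)
        · rw [if_pos (Or.inr h3), show max (i:ℕ) (j:ℕ) = (i:ℕ) by
            rw [max_eq_left (by omega)], if_neg h1, if_neg h2,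
            if_pos (by omega : 1 ≤ (i:ℕ)), if_pos (by omega : (j:ℕ) = (i:ℕ)-1)]
          ring
        · rw [if_neg (by rintro (h | h) <;> omega), if_neg h1, if_neg h2]
          by_cases hi1 : 1 ≤ (i:ℕ)
          · rw [if_pos hi1, if_neg (by omega)]; ring
          · rw [if_neg hi1]; ring
  have hmv : J.mulVec v i = ∑ j : Fin n, J i j * v j := by
    simp [Matrix.mulVec, dotProduct]
  rw [hmv, Finset.sum_congr rfl fun j _ => hsplit j, Finset.sum_add_distrib,
    Finset.sum_add_distrib, fin_sum_ite, fin_sum_ite]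
  have h3 : (∑ j : Fin n, if 1 ≤ (i:ℕ) then (if (j:ℕ) = (i:ℕ)-1 then b' i.val * v j else 0) else 0)
      = if 1 ≤ (i:ℕ) then (if h : (i:ℕ)-1 < n then b' i.val * v ⟨(i:ℕ)-1, h⟩ else 0) else 0 := by
    by_cases hi1 : 1 ≤ (i:ℕ)
    · simp only [if_pos hi1]
      exact fin_sum_ite n ((i:ℕ)-1) _
    · simp [hi1]
  rw [h3, dif_pos i.isLt]
  simp [Fin.eta]
  ring

open MeasureTheory Polynomial in
/-- λ is an eigenvalue of the n×n Jacobi matrix J iff π_n(λ) = 0. -/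
theorem jacobi_eigenvalues_are_roots
    (μ : Measure ℝ) [IsProbabilityMeasure μ]
    (hmom : ∀ n : ℕ, Integrable (fun t : ℝ => t ^ n) μ)
    (ip : ℝ[X] → ℝ[X] → ℝ)
    (hip : ∀ p q : ℝ[X], ip p q = ∫ t, p.eval t * q.eval t ∂μ)
    (hpos : ∀ p : ℝ[X], p ≠ 0 → 0 < ip p p)
    (P : ℕ → ℝ[X])
    (hmonic : ∀ i : ℕ, (P i).Monic)
    (hdeg : ∀ i : ℕ, (P i).degree = i)
    (horth : ∀ i : ℕ, ∀ q : ℝ[X], q.degree < (i : ℕ) → ip (P i) q = 0)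
    (π : ℕ → ℝ[X])
    (hπ : ∀ i : ℕ, π i = (Real.sqrt (ip (P i) (P i)))⁻¹ • P i)
    (α : ℕ → ℝ) (hα : ∀ i : ℕ, α i = ip (X * π i) (π i))
    (β : ℕ → ℝ)
    (hβ : ∀ i : ℕ, 1 ≤ i → β i = ip (P i) (P i) / ip (P (i - 1)) (P (i - 1)))
    (n : ℕ) (hn : 1 ≤ n)
    (J : Matrix (Fin n) (Fin n) ℝ)
    (hJ : ∀ i j : Fin n, J i j =
      if i = j then α i.val
      else if i.val + 1 = j.val ∨ j.val + 1 = i.val then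
        Real.sqrt (β (max i.val j.val))
      else 0)
    (lam : ℝ) :
    (∃ v : Fin n → ℝ, v ≠ 0 ∧ J.mulVec v = lam • v) ↔ (π n).eval lam = 0 := by
  obtain ⟨hβpos, hπ0, hrec⟩ :=
    scalar_rec μ hmom ip hip hpos P hmonic hdeg horth π hπ α hα β hβ lam
  set p : ℕ → ℝ := fun k => (π k).eval lam with hp_def
  set b : ℕ → ℝ := fun k => Real.sqrt (β k) with hb_def
  have hbpos : ∀ k, 1 ≤ k → 0 < b k := fun k hk => Real.sqrt_pos.mpr (hβpos k hk)
  have hp0 : 0 < p 0 := hπ0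
  -- hrec : ∀ k, b (k+1) * p (k+1) = (lam - α k) * p k - (if 1 ≤ k then b k * p (k-1) else 0)
  constructor
  · rintro ⟨v, hv, heig⟩
    set W : ℕ → ℝ := fun k => if h : k < n then v ⟨k, h⟩ else 0 with hW_def
    have hWv : ∀ i : Fin n, W (i : ℕ) = v i := by
      intro i; rw [hW_def]; simp [dif_pos i.isLt]
    have hrow : ∀ k : ℕ, k < n →
        (if 1 ≤ k then b k * W (k-1) else 0) + α k * W k + b (k+1) * W (k+1)
          = lam * W k := by
      intro k hk
      have h1 := congrFun heig ⟨k, hk⟩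
      rw [tridiag_mulVec n α b J hJ v ⟨k, hk⟩] at h1
      have h2 : (lam • v) ⟨k, hk⟩ = lam * W k := by
        rw [Pi.smul_apply, smul_eq_mul, hWv ⟨k, hk⟩]
      rw [h2] at h1
      have t1 : W (k-1) = if h : k - 1 < n then v ⟨k-1, h⟩ else 0 := by
        simp only [hW_def]
      have t2 : W (k+1) = if h : k+1 < n then v ⟨k+1, h⟩ else 0 := by
        simp only [hW_def]
      have t3 : W k = v ⟨k, hk⟩ := hWv ⟨k, hk⟩
      rw [t3] at h1
      rw [t3, t2, ← h1]
      congr 1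
      · congr 1
        by_cases hk1 : 1 ≤ k
        · rw [if_pos hk1, if_pos hk1, t1, dif_pos (show k - 1 < n by omega),
            dif_pos (show k - 1 < n by omega)]
        · rw [if_neg hk1, if_neg hk1]
      · by_cases hk2 : k + 1 < n
        · rw [dif_pos hk2, dif_pos hk2]
        · rw [dif_neg hk2, dif_neg hk2, mul_zero]
    set t : ℝ := W 0 / p 0 with ht_def
    have hWt : ∀ k, k < n → W k = t * p k := by
      intro k
      induction k using Nat.strong_induction_on with
      | _ k ih =>
        intro hk
        match k with
        | 0 =>
          rw [ht_def]
          field_simp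
        | Nat.succ m =>
          have hm : m < n := by omega
          have h1 := hrow m hm
          have h2 := hrec m
          have hWm : W m = t * p m := ih m (by omega) hm
          have hWm1 : (if 1 ≤ m then b m * W (m-1) else 0)
              = t * (if 1 ≤ m then b m * p (m-1) else 0) := by
            by_cases hm1 : 1 ≤ m
            · rw [if_pos hm1, if_pos hm1, ih (m-1) (by omega) (by omega)]
              ring
            · rw [if_neg hm1, if_neg hm1, mul_zero]
          have h3 : b (m+1) * W (m+1) = b (m+1) * (t * p (m+1)) := by
            have : b (m+1) * W (m+1)
                = lam * W m - α m * W m - (if 1 ≤ m then b m * W (m-1) else 0) := by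
              linarith [h1]
            rw [this, hWm, hWm1]
            have : b (m+1) * (t * p (m+1)) = t * (b (m+1) * p (m+1)) := by ring
            rw [this, h2]
            ring
          have hbm1 : b (m+1) ≠ 0 := (hbpos (m+1) (by omega)).ne'
          exact mul_left_cancel₀ hbm1 h3
    have ht : t ≠ 0 := by
      intro ht0
      apply hv
      funext j
      show v j = 0
      have h4 := hWt (j : ℕ) j.isLt
      rw [ht0, zero_mul] at h4
      rw [← hWv j]
      exact h4
    -- last row
    have hlast := hrow (n-1) (by omega)
    have hWn : W n = 0 := by rw [hW_def]; simp
    have hn1 : n - 1 + 1 = n := by omega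
    rw [hn1, hWn, mul_zero, add_zero] at hlast
    have h2 := hrec (n-1)
    rw [hn1] at h2
    have hWsub : (if 1 ≤ n-1 then b (n-1) * W (n-1-1) else 0)
        = t * (if 1 ≤ n-1 then b (n-1) * p (n-1-1) else 0) := by
      by_cases hm1 : 1 ≤ n-1
      · rw [if_pos hm1, if_pos hm1, hWt (n-1-1) (by omega)]
        ring
      · rw [if_neg hm1, if_neg hm1, mul_zero]
    rw [hWsub, hWt (n-1) (by omega)] at hlast
    have hzero : t * (b n * p n) = 0 := by
      rw [h2]
      nlinarith [hlast]
    have : b n * p n = 0 := by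
      rcases mul_eq_zero.mp hzero with h | h
      · exact absurd h ht
      · exact h
    rcases mul_eq_zero.mp this with h | h
    · exact absurd h (hbpos n hn).ne'
    · exact h
  · intro hpn
    have hpn' : p n = 0 := hpn
    refine ⟨fun j => p (j : ℕ), ?_, ?_⟩
    · intro h0
      have := congrFun h0 ⟨0, by omega⟩
      simp only [Pi.zero_apply] at this
      exact absurd this (ne_of_gt hp0)
    · funext i
      rw [tridiag_mulVec n α b J hJ _ i]
      simp only [Fin.val_mk]
      have hterm : (if h : (i:ℕ)+1 < n then b ((i:ℕ)+1) * p ((i:ℕ)+1) else 0)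
          = b ((i:ℕ)+1) * p ((i:ℕ)+1) := by
        by_cases h : (i:ℕ)+1 < n
        · rw [dif_pos h]
        · have hin : (i:ℕ)+1 = n := by have := i.isLt; omega
          rw [dif_neg h, hin, hpn', mul_zero]
      have hterm3 : (if 1 ≤ (i:ℕ) then (if h : (i:ℕ)-1 < n then b (i:ℕ) * p ((i:ℕ)-1) else 0) else 0)
          = (if 1 ≤ (i:ℕ) then b (i:ℕ) * p ((i:ℕ)-1) else 0) := by
        by_cases hk1 : 1 ≤ (i:ℕ)
        · rw [if_pos hk1, if_pos hk1, dif_pos (show (i:ℕ)-1 < n by have := i.isLt; omega)]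
        · rw [if_neg hk1, if_neg hk1]
      rw [hterm, hterm3]
      show (if 1 ≤ (i:ℕ) then b (i:ℕ) * p ((i:ℕ)-1) else 0) + α (i:ℕ) * p (i:ℕ)
          + b ((i:ℕ)+1) * p ((i:ℕ)+1) = lam * p (i:ℕ)
      rw [hrec (i:ℕ)]
      ring
end

section
/- The n-point Gaussian quadrature rule has degree of exactness 2n−1: for every real polynomial p with deg p ≤ 2n−1, one has Σ_{j=0}^{n−1} ν_j p(λ_j) = ∫ p(t) dμ(t). -/
open MeasureTheory Polynomial

lemma gq_integrable_poly (μ : Measure ℝ)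
    (hmom : ∀ n : ℕ, Integrable (fun t : ℝ => t ^ n) μ) (p : ℝ[X]) :
    Integrable (fun t => p.eval t) μ := by
  have h : (fun t : ℝ => p.eval t)
      = fun t => ∑ i ∈ Finset.range (p.natDegree + 1), p.coeff i * t ^ i := by
    funext t; exact p.eval_eq_sum_range t
  rw [h]
  exact integrable_finset_sum _ (fun i _ => (hmom i).const_mul _)

lemma gq_span (P : ℕ → ℝ[X]) (hmonic : ∀ i : ℕ, (P i).Monic)
    (hdeg : ∀ i : ℕ, (P i).degree = i) (n : ℕ) :
    ∀ p : ℝ[X], p.degree < (n : ℕ) → ∃ c : Fin n → ℝ, p = ∑ i, c i • P i := by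
  suffices H : ∀ N : ℕ, ∀ p : ℝ[X], p.natDegree < N → p.degree < (n : ℕ) →
      ∃ c : Fin n → ℝ, p = ∑ i, c i • P i by
    intro p hp; exact H (p.natDegree + 1) p (Nat.lt_succ_self _) hp
  intro N
  induction N with
  | zero => intro p h; omega
  | succ N ih =>
    intro p hpN hpn
    by_cases hp0 : p = 0
    · exact ⟨0, by simp [hp0]⟩
    have hdp : p.degree = (p.natDegree : WithBot ℕ) := degree_eq_natDegree hp0
    have hd : p.natDegree < n := by
      rw [hdp] at hpn; exact_mod_cast hpn
    have hlc : p.leadingCoeff ≠ 0 := leadingCoeff_ne_zero.mpr hp0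
    set d := p.natDegree with hdd
    set s : ℝ[X] := C p.leadingCoeff * P d with hs
    have hdegs : s.degree = p.degree := by
      rw [hs, degree_C_mul hlc, hdeg, hdp]
    have hlcs : s.leadingCoeff = p.leadingCoeff := by
      rw [hs, leadingCoeff_mul, leadingCoeff_C, (hmonic d).leadingCoeff, mul_one]
    set q : ℝ[X] := p - s with hq
    have hps : p = q + s := by ring
    have hsum : (∑ i : Fin n, (if (i : ℕ) = d then p.leadingCoeff else 0) • P (i : ℕ)) = s := by
      rw [Finset.sum_eq_single (⟨d, hd⟩ : Fin n)]
      · rw [if_pos rfl, hs, smul_eq_C_mul]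
      · intro b _ hb
        have hbd : (b : ℕ) ≠ d := fun h => hb (Fin.ext h)
        rw [if_neg hbd, zero_smul]
      · simp
    by_cases hq0 : q = 0
    · refine ⟨fun i => if (i : ℕ) = d then p.leadingCoeff else 0, ?_⟩
      conv_lhs => rw [hps, hq0, zero_add]
      exact hsum.symm
    have hqdeg : q.degree < p.degree := degree_sub_lt hdegs.symm hp0 hlcs.symm
    have hqN : q.natDegree < N := by
      have h1 : q.natDegree < p.natDegree := natDegree_lt_natDegree hq0 hqdeg
      omega
    obtain ⟨c, hc⟩ := ih q hqN (hqdeg.trans hpn)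
    refine ⟨fun i => c i + if (i : ℕ) = d then p.leadingCoeff else 0, ?_⟩
    have hsplit : (∑ i : Fin n, (c i + if (i : ℕ) = d then p.leadingCoeff else 0) • P (i : ℕ))
        = (∑ i : Fin n, c i • P (i : ℕ)) + ∑ i : Fin n, (if (i : ℕ) = d then p.leadingCoeff else 0) • P (i : ℕ) := by
      rw [← Finset.sum_add_distrib]
      exact Finset.sum_congr rfl fun i _ => add_smul _ _ _
    rw [hsplit, ← hc, hsum]
    exact hps

lemma gq_withbot (a : WithBot ℕ) (n : ℕ) (h : a < (n : WithBot ℕ)) :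
    a ≤ ((n - 1 : ℕ) : WithBot ℕ) := by
  cases a with
  | bot => exact bot_le
  | coe m =>
    have hm : m < n := by
      rw [Nat.cast_withBot] at h
      exact WithBot.coe_lt_coe.mp h
    rw [Nat.cast_withBot]
    exact WithBot.coe_le_coe.mpr (by omega)

/-- the n-point Gaussian quadrature rule has degree of exactness
2n − 1. -/
theorem gaussian_quadrature_exactness
    (μ : Measure ℝ) [IsProbabilityMeasure μ]
    (hmom : ∀ n : ℕ, Integrable (fun t : ℝ => t ^ n) μ)
    (ip : ℝ[X] → ℝ[X] → ℝ)
    (hip : ∀ p q : ℝ[X], ip p q = ∫ t, p.eval t * q.eval t ∂μ)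
    (hpos : ∀ p : ℝ[X], p ≠ 0 → 0 < ip p p)
    (P : ℕ → ℝ[X])
    (hmonic : ∀ i : ℕ, (P i).Monic)
    (hdeg : ∀ i : ℕ, (P i).degree = i)
    (horth : ∀ i : ℕ, ∀ q : ℝ[X], q.degree < (i : ℕ) → ip (P i) q = 0)
    (π : ℕ → ℝ[X])
    (hπ : ∀ i : ℕ, π i = (Real.sqrt (ip (P i) (P i)))⁻¹ • P i)
    (n : ℕ) (hn : 1 ≤ n)
    (lam : Fin n → ℝ) (hlinj : Function.Injective lam)
    (hlroot : ∀ j : Fin n, (π n).eval (lam j) = 0)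
    (ν : Fin n → ℝ)
    (hν : ∀ j : Fin n, ν j = (∑ i : Fin n, (π i.val).eval (lam j) ^ 2)⁻¹) :
    ∀ p : ℝ[X], p.degree ≤ (2 * n - 1 : ℕ) →
      ∑ j : Fin n, ν j * p.eval (lam j) = ∫ t, p.eval t ∂μ := by
  have hInt : ∀ p : ℝ[X], Integrable (fun t => p.eval t) μ := gq_integrable_poly μ hmom
  set g : ℕ → ℝ := fun i => ip (P i) (P i) with hg
  have hgpos : ∀ i, 0 < g i := fun i => hpos _ (hmonic i).ne_zero
  -- integral form of ip on products
  have hip' : ∀ p q : ℝ[X], ∫ t, (p * q).eval t ∂μ = ip p q := by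
    intro p q; rw [hip]; congr 1; funext t; rw [eval_mul]
  -- pairwise orthogonality
  have horth2 : ∀ i k : ℕ, i ≠ k →
      ∫ t, ((P i) * (P k)).eval t ∂μ = 0 := by
    intro i k hik
    rcases hik.lt_or_gt with h | h
    · rw [show (P i) * (P k) = (P k) * (P i) from mul_comm _ _, hip']
      exact horth k (P i) (by rw [hdeg i]; exact_mod_cast h)
    · rw [hip']
      exact horth i (P k) (by rw [hdeg k]; exact_mod_cast h)
  -- roots of P n
  have hProot : ∀ j, (P n).eval (lam j) = 0 := by
    intro j
    have h := hlroot j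
    rw [hπ n, eval_smul, smul_eq_mul] at h
    have hs : (Real.sqrt (g n))⁻¹ ≠ 0 :=
      inv_ne_zero (Real.sqrt_ne_zero'.mpr (hgpos n))
    exact (mul_eq_zero.mp h).resolve_left hs
  -- Lagrange basis and auxiliary weights
  set L : Fin n → ℝ[X] := fun j => Lagrange.basis Finset.univ lam j with hL
  set w : Fin n → ℝ := fun j => ∫ t, (L j).eval t ∂μ with hw
  have hLinjOn : Set.InjOn lam (Finset.univ : Finset (Fin n)) :=
    fun a _ b _ h => hlinj h
  have hcard : (Finset.univ : Finset (Fin n)).card = n := by simp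
  have hLdeg : ∀ j, (L j).degree = ((n - 1 : ℕ) : WithBot ℕ) := by
    intro j
    rw [hL]
    have := Lagrange.degree_basis hLinjOn (Finset.mem_univ j)
    rwa [hcard] at this
  have hLself : ∀ j, (L j).eval (lam j) = 1 :=
    fun j => Lagrange.eval_basis_self hLinjOn (Finset.mem_univ j)
  have hLne : ∀ j k : Fin n, j ≠ k → (L j).eval (lam k) = 0 :=
    fun j k h => Lagrange.eval_basis_of_ne h (Finset.mem_univ k)
  -- exactness for degree < n with weights w
  have E1 : ∀ r : ℝ[X], r.degree < (n : ℕ) →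
      ∑ j, w j * r.eval (lam j) = ∫ t, r.eval t ∂μ := by
    intro r hr
    have hrep : r = Lagrange.interpolate Finset.univ lam (fun j => r.eval (lam j)) :=
      Lagrange.eq_interpolate hLinjOn (by rwa [hcard])
    conv_rhs => rw [hrep]
    rw [Lagrange.interpolate_apply]
    have : (fun t => (∑ j, C (r.eval (lam j)) * Lagrange.basis Finset.univ lam j).eval t)
        = fun t => ∑ j, r.eval (lam j) * (L j).eval t := by
      funext t
      rw [eval_finset_sum]
      exact Finset.sum_congr rfl fun j _ => by rw [eval_mul, eval_C, hL]
    rw [this, integral_finset_sum]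
    · exact Finset.sum_congr rfl fun j _ => by
        rw [integral_const_mul, mul_comm]
    · intro j _
      exact (hInt (L j)).const_mul _
  -- exactness for degree ≤ 2n-1 with weights w
  have E2 : ∀ p : ℝ[X], p.degree ≤ ((2 * n - 1 : ℕ) : WithBot ℕ) →
      ∑ j, w j * p.eval (lam j) = ∫ t, p.eval t ∂μ := by
    intro p hp
    have hmn : (P n).Monic := hmonic n
    have hPn : (P n).natDegree = n := natDegree_eq_of_degree_eq_some (hdeg n)
    set q := p /ₘ P n with hqdef
    set r := p %ₘ P n with hrdef
    have hpe : r + P n * q = p := modByMonic_add_div p (P n)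
    have hrdeg : r.degree < ((n : ℕ) : WithBot ℕ) := by
      have := degree_modByMonic_lt p hmn
      rwa [hdeg n] at this
    have hqdeg : q.degree < ((n : ℕ) : WithBot ℕ) := by
      have h1 : q.natDegree = p.natDegree - n := by
        rw [hqdef, natDegree_divByMonic p hmn, hPn]
      have hpn : p.natDegree ≤ 2 * n - 1 := natDegree_le_iff_degree_le.mpr hp
      refine lt_of_le_of_lt (degree_le_natDegree) ?_
      exact_mod_cast Nat.lt_of_le_of_lt (le_of_eq h1) (by omega)
    have hortho : ∫ t, (P n * q).eval t ∂μ = 0 := by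
      rw [hip']; exact horth n q hqdeg
    have hsum : ∑ j, w j * p.eval (lam j) = ∑ j, w j * r.eval (lam j) := by
      refine Finset.sum_congr rfl fun j _ => ?_
      rw [← hpe, eval_add, eval_mul, hProot j, zero_mul, add_zero]
    have hint : ∫ t, p.eval t ∂μ = ∫ t, r.eval t ∂μ := by
      conv_lhs => rw [← hpe]
      have : (fun t => (r + P n * q).eval t)
          = fun t => r.eval t + (P n * q).eval t := by
        funext t; rw [eval_add]
      rw [this, integral_add (hInt r) (hInt (P n * q)), hortho, add_zero]
    rw [hsum, hint]
    exact E1 r hrdeg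
  -- weights agree: w = ν
  have hwv : ∀ j, w j = ν j := by
    intro j
    obtain ⟨c, hc⟩ := gq_span P hmonic hdeg n (L j)
      (by rw [hLdeg j]; exact_mod_cast (by omega : n - 1 < n))
    set S : ℝ := ∑ i : Fin n, (g i)⁻¹ * (P i).eval (lam j) ^ 2 with hS
    set Q : ℝ[X] := ∑ i : Fin n, ((g (i : ℕ))⁻¹ * (P (i : ℕ)).eval (lam j)) • P (i : ℕ) with hQ
    have hQdeg : Q.degree < ((n : ℕ) : WithBot ℕ) := by
      refine lt_of_le_of_lt (degree_sum_le _ _) ?_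
      rw [Finset.sup_lt_iff (by exact_mod_cast WithBot.bot_lt_coe n)]
      intro i _
      refine lt_of_le_of_lt (degree_smul_le _ _) ?_
      rw [hdeg]
      exact_mod_cast i.isLt
    have hQeval : ∀ k, Q.eval (lam k)
        = ∑ i : Fin n, (g (i : ℕ))⁻¹ * (P (i : ℕ)).eval (lam j) * (P (i : ℕ)).eval (lam k) := by
      intro k
      rw [hQ, eval_finset_sum]
      exact Finset.sum_congr rfl fun i _ => by rw [eval_smul, smul_eq_mul]
    have hproddeg : (L j * Q).degree ≤ ((2 * n - 1 : ℕ) : WithBot ℕ) := by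
      refine le_trans (degree_mul_le _ _) ?_
      rw [hLdeg j]
      refine le_trans (add_le_add_right (gq_withbot _ _ hQdeg) _) ?_
      rw [← Nat.cast_add]
      exact_mod_cast (by omega : n - 1 + (n - 1) ≤ 2 * n - 1)
    have key := E2 (L j * Q) hproddeg
    have hLHS : ∑ k, w k * (L j * Q).eval (lam k) = w j * S := by
      rw [Finset.sum_eq_single j]
      · rw [eval_mul, hLself j, one_mul, hQeval j, hS]
        congr 1
        exact Finset.sum_congr rfl fun i _ => by ring
      · intro k _ hk
        rw [eval_mul, hLne j k (Ne.symm hk), zero_mul, mul_zero]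
      · intro h; exact absurd (Finset.mem_univ j) h
    have hPP : ∀ i : Fin n, ∫ t, ((L j) * P (i : ℕ)).eval t ∂μ = c i * g (i : ℕ) := by
      intro i
      have hexp : (L j) * P (i : ℕ) = ∑ k : Fin n, c k • (P (k : ℕ) * P (i : ℕ)) := by
        rw [hc, Finset.sum_mul]
        exact Finset.sum_congr rfl fun k _ => smul_mul_assoc _ _ _
      rw [hexp]
      have heval : (fun t => (∑ k : Fin n, c k • (P (k : ℕ) * P (i : ℕ))).eval t)
          = fun t => ∑ k : Fin n, c k * (P (k : ℕ) * P (i : ℕ)).eval t := by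
        funext t
        rw [eval_finset_sum]
        exact Finset.sum_congr rfl fun k _ => by rw [eval_smul, smul_eq_mul]
      rw [heval, integral_finset_sum _ (fun k _ => (hInt _).const_mul _)]
      rw [Finset.sum_eq_single i]
      · rw [integral_const_mul, hip']
      · intro k _ hk
        rw [integral_const_mul, horth2 _ _ (fun h => hk (Fin.ext h)), mul_zero]
      · intro h; exact absurd (Finset.mem_univ i) h
    have hRHS : ∫ t, (L j * Q).eval t ∂μ = 1 := by
      have hexp : L j * Q
          = ∑ i : Fin n, ((g (i : ℕ))⁻¹ * (P (i : ℕ)).eval (lam j)) • ((L j) * P (i : ℕ)) := by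
        rw [hQ, Finset.mul_sum]
        exact Finset.sum_congr rfl fun i _ => mul_smul_comm _ _ _
      rw [hexp]
      have heval : (fun t => (∑ i : Fin n,
            ((g (i : ℕ))⁻¹ * (P (i : ℕ)).eval (lam j)) • ((L j) * P (i : ℕ))).eval t)
          = fun t => ∑ i : Fin n,
            ((g (i : ℕ))⁻¹ * (P (i : ℕ)).eval (lam j)) * ((L j) * P (i : ℕ)).eval t := by
        funext t
        rw [eval_finset_sum]
        exact Finset.sum_congr rfl fun i _ => by rw [eval_smul, smul_eq_mul]
      rw [heval, integral_finset_sum _ (fun i _ => (hInt _).const_mul _)]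
      have hterm : ∀ i : Fin n,
          ∫ t, ((g (i : ℕ))⁻¹ * (P (i : ℕ)).eval (lam j)) * ((L j) * P (i : ℕ)).eval t ∂μ
            = c i * (P (i : ℕ)).eval (lam j) := by
        intro i
        rw [integral_const_mul, hPP i]
        have hg0 : g (i : ℕ) ≠ 0 := (hgpos _).ne'
        field_simp
      rw [Finset.sum_congr rfl fun i _ => hterm i]
      have : ∑ i : Fin n, c i * (P (i : ℕ)).eval (lam j) = (L j).eval (lam j) := by
        rw [hc, eval_finset_sum]
        exact Finset.sum_congr rfl fun i _ => by rw [eval_smul, smul_eq_mul]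
      rw [this, hLself j]
    have hkey : w j * S = 1 := by rw [← hLHS, key, hRHS]
    have hS0 : S ≠ 0 := by
      intro h; rw [h, mul_zero] at hkey; exact one_ne_zero hkey.symm
    have hSν : ν j = S⁻¹ := by
      rw [hν j, hS]
      congr 1
      refine Finset.sum_congr rfl fun i _ => ?_
      rw [hπ (i : ℕ), eval_smul, smul_eq_mul, mul_pow]
      congr 1
      rw [← Real.sqrt_inv, Real.sq_sqrt (inv_nonneg.mpr (hgpos (i : ℕ)).le)]
    have hwS : w j = S⁻¹ :=
      mul_right_cancel₀ hS0 (by rw [hkey, inv_mul_cancel₀ hS0])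
    rw [hwS, hSν]
  intro p hp
  rw [← E2 p hp]
  exact Finset.sum_congr rfl fun j _ => by rw [hwv j]
end

section
/- The orthonormal polynomials are orthonormal with respect to the discrete measure defined by the n-point Gaussian quadrature rule: for all 0 ≤ i, k ≤ n−1, Σ_{j=0}^{n−1} ν_j π_i(λ_j) π_k(λ_j) equals 1 if i = k and 0 otherwise; equivalently, the n×n matrix Q with entries Q(i,j) = √ν_j · π_i(λ_j) is an orthogonal matrix. -/
open MeasureTheory Polynomial Matrix

/-- the orthonormal polynomials are orthonormal with respect to the
discrete measure of the n-point Gaussian quadrature rule; equivalently the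
matrix Q(i,j) = √ν_j · π_i(λ_j) is an orthogonal matrix. -/
theorem discrete_orthonormality_gauss
    (μ : Measure ℝ) [IsProbabilityMeasure μ]
    (hmom : ∀ n : ℕ, Integrable (fun t : ℝ => t ^ n) μ)
    (ip : ℝ[X] → ℝ[X] → ℝ)
    (hip : ∀ p q : ℝ[X], ip p q = ∫ t, p.eval t * q.eval t ∂μ)
    (hpos : ∀ p : ℝ[X], p ≠ 0 → 0 < ip p p)
    (P : ℕ → ℝ[X])
    (hmonic : ∀ i : ℕ, (P i).Monic)
    (hdeg : ∀ i : ℕ, (P i).degree = i)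
    (horth : ∀ i : ℕ, ∀ q : ℝ[X], q.degree < (i : ℕ) → ip (P i) q = 0)
    (π : ℕ → ℝ[X])
    (hπ : ∀ i : ℕ, π i = (Real.sqrt (ip (P i) (P i)))⁻¹ • P i)
    (n : ℕ) (hn : 1 ≤ n)
    (lam : Fin n → ℝ) (hlinj : Function.Injective lam)
    (hlroot : ∀ j : Fin n, (π n).eval (lam j) = 0)
    (ν : Fin n → ℝ)
    (hν : ∀ j : Fin n, ν j = (∑ i : Fin n, (π i.val).eval (lam j) ^ 2)⁻¹)
    (Q : Matrix (Fin n) (Fin n) ℝ)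
    (hQ : ∀ i j : Fin n, Q i j = Real.sqrt (ν j) * (π i.val).eval (lam j)) :
    (∀ i k : Fin n,
      ∑ j : Fin n, ν j * ((π i.val).eval (lam j) * (π k.val).eval (lam j)) =
        if i = k then 1 else 0) ∧
    Qᵀ * Q = 1 ∧ Q * Qᵀ = 1 := by
  classical
  -- integrability of polynomials
  have hint : ∀ p : ℝ[X], Integrable (fun t => p.eval t) μ := by
    intro p
    have h1 : (fun t : ℝ => p.eval t) = fun t => ∑ i ∈ p.support, p.coeff i * t ^ i := by
      funext t; rw [Polynomial.eval_eq_sum, Polynomial.sum]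
    rw [h1]
    exact integrable_finset_sum _ fun i _ => (hmom i).const_mul _
  have hintmul : ∀ p q : ℝ[X], Integrable (fun t => p.eval t * q.eval t) μ := by
    intro p q; simpa using hint (p * q)
  -- basic properties of ip
  have ipcomm : ∀ p q : ℝ[X], ip p q = ip q p := by
    intro p q; rw [hip, hip]; congr 1; funext t; ring
  have ipsmul : ∀ (a : ℝ) (p q : ℝ[X]), ip (a • p) q = a * ip p q := by
    intro a p q
    rw [hip, hip, ← smul_eq_mul, ← integral_smul]
    congr 1; funext t; simp [smul_eq_mul]; ring
  have ipsum : ∀ (s : Finset (Fin n)) (f : Fin n → ℝ[X]) (q : ℝ[X]),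
      ip (∑ i ∈ s, f i) q = ∑ i ∈ s, ip (f i) q := by
    intro s f q
    induction s using Finset.induction_on with
    | empty => simp [hip]
    | insert _ _ hni ih =>
      rw [Finset.sum_insert hni, Finset.sum_insert hni, ← ih, hip, hip (∑ i ∈ _, f i)]
      rw [hip]
      rw [← integral_add (hintmul _ _) (hintmul _ _)]
      congr 1; funext t; simp [add_mul]
  -- positivity facts
  have hipP : ∀ i : ℕ, 0 < ip (P i) (P i) := fun i => hpos _ (hmonic i).ne_zero
  have hsq : ∀ i : ℕ, 0 < Real.sqrt (ip (P i) (P i)) := fun i => Real.sqrt_pos.mpr (hipP i)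
  have hπdeg : ∀ i : ℕ, (π i).degree = i := by
    intro i
    rw [hπ, smul_eq_C_mul, degree_C_mul (inv_ne_zero (hsq i).ne'), hdeg]
  have hπnatdeg : ∀ i : ℕ, (π i).natDegree = i := fun i =>
    natDegree_eq_of_degree_eq_some (hπdeg i)
  have hPnatdeg : ∀ i : ℕ, (P i).natDegree = i := fun i =>
    natDegree_eq_of_degree_eq_some (hdeg i)
  have ipsmulr : ∀ (a : ℝ) (p q : ℝ[X]), ip p (a • q) = a * ip p q := by
    intro a p q; rw [ipcomm, ipsmul, ipcomm]
  -- orthonormality of π w.r.t. ip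
  have hππlt : ∀ i k : ℕ, k < i → ip (π i) (π k) = 0 := by
    intro i k hki
    rw [hπ i, ipsmul]
    rw [horth i (π k) (by rw [hπdeg k]; exact_mod_cast hki), mul_zero]
  have hππ : ∀ i k : ℕ, ip (π i) (π k) = if i = k then 1 else 0 := by
    intro i k
    rcases lt_trichotomy i k with h | h | h
    · rw [if_neg h.ne, ipcomm]; exact hππlt k i h
    · subst h
      rw [if_pos rfl, hπ i, ipsmul, ipsmulr]
      rw [inv_mul_eq_div, inv_mul_eq_div, div_div]
      rw [Real.mul_self_sqrt (hipP i).le]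
      exact div_self (hipP i).ne'
    · rw [if_neg h.ne']
      exact hππlt i k h
  -- roots of P n
  have hProot : ∀ j : Fin n, (P n).eval (lam j) = 0 := by
    intro j
    have h := hlroot j
    rw [hπ n] at h
    simpa [inv_ne_zero (hsq n).ne'] using h
  -- Lagrange basis
  set L : Fin n → ℝ[X] := fun j => Lagrange.basis Finset.univ lam j with hLdef
  have hlinjOn : Set.InjOn lam ↑(Finset.univ : Finset (Fin n)) := hlinj.injOn
  have hcard : (Finset.univ : Finset (Fin n)).card = n := by simp
  have hevalL : ∀ j j' : Fin n, (L j).eval (lam j') = if j = j' then 1 else 0 := by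
    intro j j'
    by_cases h : j = j'
    · subst h; rw [if_pos rfl]; exact Lagrange.eval_basis_self hlinjOn (Finset.mem_univ j)
    · rw [if_neg h]; exact Lagrange.eval_basis_of_ne h (Finset.mem_univ j')
  have hLdeg : ∀ j, (L j).natDegree = n - 1 := fun j => by
    simpa [hcard] using Lagrange.natDegree_basis hlinjOn (Finset.mem_univ j)
  set w : Fin n → ℝ := fun j => ∫ t, (L j).eval t ∂μ with hwdef
  -- exactness of the quadrature rule for degree < 2n
  have hexact : ∀ q : ℝ[X], q.natDegree < 2 * n →
      ∫ t, q.eval t ∂μ = ∑ j : Fin n, w j * q.eval (lam j) := by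
    intro q hq
    set r0 := q %ₘ P n with hr
    set h0 := q /ₘ P n with hh
    have hdecomp : q = P n * h0 + r0 := by
      rw [add_comm]; exact (Polynomial.modByMonic_add_div q (P n)).symm
    have hrdeg : r0.degree < ((n : ℕ) : WithBot ℕ) := by
      have := Polynomial.degree_modByMonic_lt q (hmonic n)
      rwa [hdeg n] at this
    have hhnat : h0.natDegree < n := by
      have h5 : h0.natDegree = q.natDegree - n := by
        rw [hh, Polynomial.natDegree_divByMonic q (hmonic n), hPnatdeg]
      omega
    have hhdeg : h0.degree < ((n : ℕ) : WithBot ℕ) :=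
      lt_of_le_of_lt degree_le_natDegree (by exact_mod_cast hhnat)
    have hsplit : ∫ t, q.eval t ∂μ = ip (P n) h0 + ∫ t, r0.eval t ∂μ := by
      have e1 : (fun t : ℝ => q.eval t) = fun t => (P n).eval t * h0.eval t + r0.eval t := by
        funext t; conv_lhs => rw [hdecomp]
        simp
      rw [e1, integral_add (hintmul _ _) (hint r0), ← hip]
    have hrint : r0 = ∑ j : Fin n, C (r0.eval (lam j)) * L j := by
      have h1 := Lagrange.eq_interpolate (f := r0) hlinjOn (by rwa [hcard])
      rw [Lagrange.interpolate_apply] at h1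
      exact h1
    have hintr : ∫ t, r0.eval t ∂μ = ∑ j : Fin n, w j * r0.eval (lam j) := by
      have e2 : (fun t : ℝ => r0.eval t) = fun t => ∑ j : Fin n, r0.eval (lam j) * (L j).eval t := by
        funext t; conv_lhs => rw [hrint]
        simp [Polynomial.eval_finset_sum]
      rw [e2, integral_finset_sum _ (fun j _ => (hint (L j)).const_mul _)]
      refine Finset.sum_congr rfl fun j _ => ?_
      rw [MeasureTheory.integral_const_mul]
      ring
    have hq_eval : ∀ j, q.eval (lam j) = r0.eval (lam j) := by
      intro j; conv_lhs => rw [hdecomp]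
      simp [hProot j]
    rw [hsplit, horth n h0 hhdeg, hintr, zero_add]
    exact (Finset.sum_congr rfl fun j _ => by rw [hq_eval j]).symm
  -- discrete orthonormality with weights w
  have hdisc : ∀ i k : Fin n,
      ∑ j : Fin n, w j * ((π i.val).eval (lam j) * (π k.val).eval (lam j)) =
        if i = k then 1 else 0 := by
    intro i k
    have hd : (π i.val * π k.val).natDegree < 2 * n := by
      have h0 := Polynomial.natDegree_mul_le (p := π i.val) (q := π k.val)
      have h1 := hπnatdeg i.val; have h2 := hπnatdeg k.val
      have h3 := i.isLt; have h4 := k.isLt; omega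
    have h3 := hexact (π i.val * π k.val) hd
    simp only [eval_mul] at h3
    have e1 : ip (π i.val) (π k.val) =
        ∑ j : Fin n, w j * ((π i.val).eval (lam j) * (π k.val).eval (lam j)) := by
      rw [hip]; exact h3
    rw [← e1, hππ]
    simp [Fin.val_inj]
  -- moments of Lagrange polynomials against π
  have hLπ : ∀ (j : Fin n) (i : Fin n), ip (L j) (π i.val) = w j * (π i.val).eval (lam j) := by
    intro j i
    have hd : (L j * π i.val).natDegree < 2 * n := by
      have h0 := Polynomial.natDegree_mul_le (p := L j) (q := π i.val)
      have h1 := hLdeg j; have h2 := hπnatdeg i.val; have h3 := i.isLt; omega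
    have h3 := hexact (L j * π i.val) hd
    simp only [eval_mul] at h3
    rw [hip, h3, Finset.sum_eq_single j]
    · rw [hevalL j j, if_pos rfl, one_mul]
    · intro b _ hb; rw [hevalL j b, if_neg fun e => hb e.symm]; ring
    · intro hj; exact absurd (Finset.mem_univ j) hj
  -- span: polynomials of degree ≤ d are combinations of π 0, ..., π d
  have hspan : ∀ d : ℕ, ∀ p : ℝ[X], p.natDegree ≤ d →
      ∃ a : ℕ → ℝ, p = ∑ i ∈ Finset.range (d + 1), a i • π i := by
    intro d
    induction d with
    | zero =>
      intro p hp
      refine ⟨fun _ => p.coeff 0 * Real.sqrt (ip (P 0) (P 0)), ?_⟩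
      have hP0 : P 0 = 1 := (hmonic 0).natDegree_eq_zero.mp (hPnatdeg 0)
      rw [Finset.sum_range_one, hπ 0, smul_smul, mul_assoc,
        mul_inv_cancel₀ (hsq 0).ne', mul_one, hP0, smul_eq_C_mul, mul_one]
      exact Polynomial.eq_C_of_natDegree_le_zero hp
    | succ d ihd =>
      intro p hp
      set b := p.coeff (d + 1) with hb
      set q := p - b • P (d + 1) with hqdef
      have hqd : q.natDegree ≤ d := by
        refine Polynomial.natDegree_le_iff_coeff_eq_zero.mpr fun m hm => ?_
        rw [hqdef, Polynomial.coeff_sub, Polynomial.coeff_smul, smul_eq_mul]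
        rcases eq_or_lt_of_le (Nat.succ_le_of_lt hm) with hm1 | hm1
        · rw [← hm1]
          have hc : (P (d+1)).coeff (d+1) = 1 := by
            have hc1 := (hmonic (d+1)).leadingCoeff
            rwa [Polynomial.leadingCoeff, hPnatdeg] at hc1
          rw [hc, mul_one, hb, sub_self]
        · have h1 : p.coeff m = 0 :=
            Polynomial.coeff_eq_zero_of_natDegree_lt (lt_of_le_of_lt hp hm1)
          have h2 : (P (d+1)).coeff m = 0 :=
            Polynomial.coeff_eq_zero_of_natDegree_lt (by rw [hPnatdeg]; exact hm1)
          rw [h1, h2, mul_zero, sub_zero]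
      obtain ⟨a, ha⟩ := ihd q hqd
      refine ⟨fun i => if i = d + 1 then b * Real.sqrt (ip (P (d+1)) (P (d+1))) else a i, ?_⟩
      have e2 : (b * Real.sqrt (ip (P (d+1)) (P (d+1)))) • π (d+1) = b • P (d+1) := by
        rw [hπ, smul_smul, mul_assoc, mul_inv_cancel₀ (hsq (d+1)).ne', mul_one]
      beta_reduce
      rw [Finset.sum_range_succ, if_pos rfl, e2]
      rw [Finset.sum_congr rfl fun i hi => by
        rw [if_neg (Finset.mem_range.mp hi).ne]]
      rw [← ha, hqdef]
      ring
  have hspanL : ∀ j : Fin n, ∃ a : Fin n → ℝ, L j = ∑ i : Fin n, a i • π i.val := by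
    intro j
    obtain ⟨a, ha⟩ := hspan (n - 1) (L j) (le_of_eq (hLdeg j))
    refine ⟨fun i => a i.val, ?_⟩
    rw [ha, show n - 1 + 1 = n from by omega]
    exact (Fin.sum_univ_eq_sum_range (fun i => a i • π i) n).symm
  -- w j = ip (L j) (L j) > 0
  have hLne : ∀ j, L j ≠ 0 := fun j => Lagrange.basis_ne_zero hlinjOn (Finset.mem_univ j)
  have hwLL : ∀ j, ip (L j) (L j) = w j := by
    intro j
    have hd : (L j * L j).natDegree < 2 * n := by
      have h0 := Polynomial.natDegree_mul_le (p := L j) (q := L j)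
      have h1 := hLdeg j; omega
    have h3 := hexact (L j * L j) hd
    simp only [eval_mul] at h3
    rw [hip, h3, Finset.sum_eq_single j]
    · rw [hevalL j j, if_pos rfl]; ring
    · intro b _ hb; rw [hevalL j b, if_neg fun e => hb e.symm]; ring
    · intro hj; exact absurd (Finset.mem_univ j) hj
  have hwpos : ∀ j, 0 < w j := fun j => (hwLL j) ▸ hpos _ (hLne j)
  -- the key identity  ip (L j) (L j) = w j ^ 2 * S j
  have hkey : ∀ j : Fin n,
      ip (L j) (L j) = w j ^ 2 * ∑ i : Fin n, (π i.val).eval (lam j) ^ 2 := by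
    intro j
    obtain ⟨a, ha⟩ := hspanL j
    have haa : ∀ i : Fin n, a i = w j * (π i.val).eval (lam j) := by
      intro i
      have h1 : ip (L j) (π i.val) = a i := by
        conv_lhs => rw [ha]
        rw [ipsum]
        rw [Finset.sum_congr rfl fun i' _ => by rw [ipsmul, hππ]]
        simp [Fin.val_inj]
      rw [← h1, hLπ j i]
    nth_rewrite 1 [ha]
    rw [ipsum]
    rw [Finset.sum_congr rfl fun i _ => by rw [ipsmul, ipcomm, hLπ j i, haa i]]
    rw [Finset.mul_sum]
    exact Finset.sum_congr rfl fun i _ => by ring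
  -- w = ν
  have hwv : ∀ j, w j = ν j := by
    intro j
    have h1 := hkey j
    rw [hwLL j] at h1
    have h2 : w j * (w j * ∑ i : Fin n, (π i.val).eval (lam j) ^ 2) = w j * 1 := by
      rw [mul_one]; nth_rewrite 3 [h1]; ring
    have h3 : w j * ∑ i : Fin n, (π i.val).eval (lam j) ^ 2 = 1 :=
      mul_left_cancel₀ (hwpos j).ne' h2
    have hS : (∑ i : Fin n, (π i.val).eval (lam j) ^ 2) = (w j)⁻¹ :=
      eq_inv_of_mul_eq_one_left (by rw [mul_comm] at h3; exact h3)
    rw [hν j, hS, inv_inv]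
  -- conclusion
  have hfirst : ∀ i k : Fin n,
      ∑ j : Fin n, ν j * ((π i.val).eval (lam j) * (π k.val).eval (lam j)) =
        if i = k then 1 else 0 := by
    intro i k
    rw [← hdisc i k]
    exact Finset.sum_congr rfl fun j _ => by rw [hwv j]
  have hνpos : ∀ j, 0 < ν j := fun j => (hwv j) ▸ hwpos j
  have hQQT : Q * Qᵀ = 1 := by
    ext i k
    rw [Matrix.mul_apply, Matrix.one_apply]
    rw [Finset.sum_congr rfl fun j _ => by
      rw [Matrix.transpose_apply, hQ i j, hQ k j, mul_mul_mul_comm,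
        Real.mul_self_sqrt (hνpos j).le]]
    exact hfirst i k
  exact ⟨hfirst, mul_eq_one_comm.mp hQQT, hQQT⟩
end

section
/- The Gaussian quadrature weight equals the square of the first component of the corresponding normalized eigenvector of the Jacobi matrix: if λ_j is a root of π_n and q ∈ ℝ^n is any eigenvector of J with eigenvalue λ_j of unit Euclidean norm, then q_0² = 1 / (Σ_{i=0}^{n−1} π_i(λ_j)²) = ν_j. -/
open MeasureTheory Polynomial

/-- the Gaussian quadrature weight equals the square of the first
component of the corresponding unit-norm eigenvector of the Jacobi matrix. -/
theorem gauss_weight_eq_first_eigenvector_component_sq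
    (μ : Measure ℝ) [IsProbabilityMeasure μ]
    (hmom : ∀ n : ℕ, Integrable (fun t : ℝ => t ^ n) μ)
    (ip : ℝ[X] → ℝ[X] → ℝ)
    (hip : ∀ p q : ℝ[X], ip p q = ∫ t, p.eval t * q.eval t ∂μ)
    (hpos : ∀ p : ℝ[X], p ≠ 0 → 0 < ip p p)
    (P : ℕ → ℝ[X])
    (hmonic : ∀ i : ℕ, (P i).Monic)
    (hdeg : ∀ i : ℕ, (P i).degree = i)
    (horth : ∀ i : ℕ, ∀ q : ℝ[X], q.degree < (i : ℕ) → ip (P i) q = 0)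
    (π : ℕ → ℝ[X])
    (hπ : ∀ i : ℕ, π i = (Real.sqrt (ip (P i) (P i)))⁻¹ • P i)
    (α : ℕ → ℝ) (hα : ∀ i : ℕ, α i = ip (X * π i) (π i))
    (β : ℕ → ℝ)
    (hβ : ∀ i : ℕ, 1 ≤ i → β i = ip (P i) (P i) / ip (P (i - 1)) (P (i - 1)))
    (n : ℕ) (hn : 0 < n)
    (J : Matrix (Fin n) (Fin n) ℝ)
    (hJ : ∀ i j : Fin n, J i j =
      if i = j then α i.val
      else if i.val + 1 = j.val ∨ j.val + 1 = i.val then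
        Real.sqrt (β (max i.val j.val))
      else 0)
    (lam : ℝ) (hroot : (π n).eval lam = 0)
    (ν : ℝ) (hν : ν = (∑ i : Fin n, (π i.val).eval lam ^ 2)⁻¹)
    (q : Fin n → ℝ)
    (hq : J.mulVec q = lam • q)
    (hqnorm : ∑ i : Fin n, q i ^ 2 = 1) :
    q ⟨0, hn⟩ ^ 2 = (∑ i : Fin n, (π i.val).eval lam ^ 2)⁻¹ ∧
    q ⟨0, hn⟩ ^ 2 = ν := by
  have hint : ∀ p : ℝ[X], Integrable (fun t => p.eval t) μ := by
    intro p
    have : (fun t : ℝ => p.eval t) = fun t => ∑ i ∈ Finset.range (p.natDegree + 1), p.coeff i * t ^ i := by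
      funext t; exact eval_eq_sum_range t
    rw [this]
    exact integrable_finset_sum _ (fun i _ => (hmom i).const_mul _)
  have hintm : ∀ p q : ℝ[X], Integrable (fun t => p.eval t * q.eval t) μ := by
    intro p q
    have := hint (p * q)
    simpa [eval_mul] using this
  have ip_comm : ∀ p q, ip p q = ip q p := by
    intro p q; rw [hip, hip]; congr 1; funext t; ring
  have ip_add : ∀ p p' q, ip (p + p') q = ip p q + ip p' q := by
    intro p p' q
    rw [hip, hip, hip, ← integral_add (hintm p q) (hintm p' q)]
    congr 1; funext t; simp [eval_add]; ring
  have ip_smul : ∀ (c : ℝ) p q, ip (c • p) q = c * ip p q := by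
    intro c p q
    rw [hip, hip, ← integral_const_mul]
    congr 1; funext t; simp; ring
  have ip_zero : ∀ q, ip 0 q = 0 := by
    intro q; have := ip_smul 0 0 q; simpa using this
  have ip_sub : ∀ p p' q, ip (p - p') q = ip p q - ip p' q := by
    intro p p' q
    have h1 := ip_add (p - p') p' q
    simp at h1; linarith
  have ip_Xmul : ∀ p q, ip (X * p) q = ip p (X * q) := by
    intro p q; rw [hip, hip]; congr 1; funext t; simp; ring
  have ip_sum : ∀ (s : Finset ℕ) (f : ℕ → ℝ[X]) (q : ℝ[X]),
      ip (∑ k ∈ s, f k) q = ∑ k ∈ s, ip (f k) q := by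
    intro s f q
    induction s using Finset.induction_on with
    | empty => simpa using ip_zero q
    | insert a s' h ih => rw [Finset.sum_insert h, Finset.sum_insert h, ip_add, ih]
  -- positivity
  have hPP_pos : ∀ i, 0 < ip (P i) (P i) := fun i => hpos _ (hmonic i).ne_zero
  -- span lemma
  have hspan : ∀ m : ℕ, ∀ r : ℝ[X], r.degree < (m : ℕ) →
      ∃ c : ℕ → ℝ, r = ∑ k ∈ Finset.range m, c k • P k := by
    intro m
    induction m with
    | zero =>
      intro r hr
      refine ⟨0, ?_⟩
      simp only [Finset.range_zero, Finset.sum_empty]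
      exact Polynomial.degree_lt_iff_coeff_zero r 0 |>.mp (by exact_mod_cast hr) |> fun h => by
        ext k; simpa using h k (Nat.zero_le k)
    | succ m ih =>
      intro r hr
      have hPm : (P m).coeff m = 1 := by
        have := (hmonic m).leadingCoeff
        have hnd : (P m).natDegree = m := natDegree_eq_of_degree_eq_some (hdeg m)
        rwa [Polynomial.leadingCoeff, hnd] at this
      set r' := r - r.coeff m • P m with hr'
      have hdr' : r'.degree < (m : ℕ) := by
        rw [Polynomial.degree_lt_iff_coeff_zero]
        intro j hj
        rcases eq_or_lt_of_le hj with h | h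
        · simp [hr', ← h, hPm]
        · have h1 : r.coeff j = 0 := by
            have := Polynomial.degree_lt_iff_coeff_zero r (m+1) |>.mp (by exact_mod_cast hr)
            exact this j h
          have h2 : (P m).coeff j = 0 := by
            apply Polynomial.coeff_eq_zero_of_degree_lt
            rw [hdeg m]; exact_mod_cast h
          simp [hr', h1, h2]
      obtain ⟨c, hc⟩ := ih r' hdr'
      refine ⟨fun k => if k = m then r.coeff m else c k, ?_⟩
      rw [Finset.sum_range_succ]
      have : ∀ k ∈ Finset.range m, (if k = m then r.coeff m else c k) • P k = c k • P k := by
        intro k hk; simp [Finset.mem_range.mp hk |>.ne]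
      rw [Finset.sum_congr rfl this, ← hc]
      simp [hr']
  -- orthogonal to first m implies zero
  have hzero : ∀ m : ℕ, ∀ r : ℝ[X], r.degree < (m : ℕ) →
      (∀ k, k < m → ip r (P k) = 0) → r = 0 := by
    intro m r hdr hor
    by_contra hne
    obtain ⟨c, hc⟩ := hspan m r hdr
    have : ip r r = 0 := by
      nth_rewrite 1 [hc]
      rw [ip_sum]
      apply Finset.sum_eq_zero
      intro k hk
      rw [ip_smul, ip_comm, hor k (Finset.mem_range.mp hk)]
      ring
    exact absurd this (ne_of_gt (hpos r hne))
  -- degree facts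
  have hndeg : ∀ i, (P i).natDegree = i := fun i => natDegree_eq_of_degree_eq_some (hdeg i)
  have hXP_monic : ∀ i, (X * P i).Monic := fun i => (monic_X).mul (hmonic i)
  have hXP_deg : ∀ i, (X * P i).degree = ((i + 1 : ℕ) : WithBot ℕ) := by
    intro i
    rw [degree_mul, degree_X, hdeg i]
    push_cast; ring
  -- a_i
  set a : ℕ → ℝ := fun i => ip (X * P i) (P i) / ip (P i) (P i) with ha
  -- recurrence deg bound
  have hRdeg : ∀ (i : ℕ) (r : ℝ[X]), r.degree ≤ (i:ℕ) →
      (X * P i - P (i+1) - r).degree < ((i+1 : ℕ) : WithBot ℕ) := by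
    intro i r hr
    have h1 : (X * P i - P (i+1)).degree < ((i+1 : ℕ) : WithBot ℕ) := by
      have hdd : (X * P i).degree = (P (i+1)).degree := by rw [hXP_deg i, hdeg (i+1)]
      have hlc : (X * P i).leadingCoeff = (P (i+1)).leadingCoeff := by
        rw [(hXP_monic i).leadingCoeff, (hmonic (i+1)).leadingCoeff]
      have := Polynomial.degree_sub_lt hdd (hXP_monic i).ne_zero hlc
      rwa [hXP_deg i] at this
    calc (X * P i - P (i+1) - r).degree ≤ max (X * P i - P (i+1)).degree r.degree :=
          Polynomial.degree_sub_le _ _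
      _ < ((i+1 : ℕ) : WithBot ℕ) := by
          apply max_lt h1
          exact lt_of_le_of_lt hr (by exact_mod_cast WithBot.coe_lt_coe.mpr (Nat.lt_succ_self i))
  -- key inner products
  have key_XPi_Pim1 : ∀ i : ℕ, ip (X * P i) (P i) = a i * ip (P i) (P i) := by
    intro i; rw [ha]; exact (div_mul_cancel₀ _ (hPP_pos i).ne').symm
  -- ip (P i) (X * P (i-1)) = ip (P i) (P i) for i ≥ 1
  have key2 : ∀ i : ℕ, ip (P (i+1)) (X * P i) = ip (P (i+1)) (P (i+1)) := by
    intro i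
    have hd : (X * P i - P (i+1)).degree < ((i+1:ℕ) : WithBot ℕ) := by
      have hdd : (X * P i).degree = (P (i+1)).degree := by rw [hXP_deg i, hdeg (i+1)]
      have hlc : (X * P i).leadingCoeff = (P (i+1)).leadingCoeff := by
        rw [(hXP_monic i).leadingCoeff, (hmonic (i+1)).leadingCoeff]
      have := Polynomial.degree_sub_lt hdd (hXP_monic i).ne_zero hlc
      rwa [hXP_deg i] at this
    have := horth (i+1) _ hd
    have h2 : ip (P (i+1)) (X * P i - P (i+1)) =
        ip (P (i+1)) (X * P i) - ip (P (i+1)) (P (i+1)) := by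
      rw [ip_comm, ip_sub, ip_comm (X * P i), ip_comm (P (i+1))]
    rw [h2] at this; linarith
  -- recurrence, i = 0  : X * P 0 = P 1 + a 0 • P 0
  have hrec0 : X * P 0 = P 1 + a 0 • P 0 := by
    set R := X * P 0 - P 1 - a 0 • P 0 with hR
    have hdR : R.degree < ((1:ℕ) : WithBot ℕ) := by
      apply hRdeg 0
      calc (a 0 • P 0).degree ≤ (P 0).degree := degree_smul_le _ _
        _ ≤ (0:ℕ) := le_of_eq (hdeg 0)
    have hor : ∀ k, k < 1 → ip R (P k) = 0 := by
      intro k hk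
      interval_cases k
      rw [hR, ip_sub, ip_sub, ip_smul]
      have h1 : ip (P 1) (P 0) = 0 := by
        exact horth 1 _ (by rw [hdeg 0]; exact_mod_cast Nat.zero_lt_one)
      rw [h1, key_XPi_Pim1 0]
      ring
    have := hzero 1 R hdR hor
    rw [hR] at this
    have : X * P 0 - P 1 - a 0 • P 0 = 0 := this
    linear_combination (norm := ring_nf) this
  have hβ' : ∀ i : ℕ, β (i+1) = ip (P (i+1)) (P (i+1)) / ip (P i) (P i) := by
    intro i
    have := hβ (i+1) (by omega)
    simpa using this
  have hrec : ∀ i : ℕ, X * P (i+1) = P (i+2) + (a (i+1) • P (i+1) + β (i+1) • P i) := by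
    intro i
    set R := X * P (i+1) - P (i+2) - (a (i+1) • P (i+1) + β (i+1) • P i) with hR
    have hdR : R.degree < ((i+2 : ℕ) : WithBot ℕ) := by
      apply hRdeg (i+1)
      calc (a (i+1) • P (i+1) + β (i+1) • P i).degree
          ≤ max (a (i+1) • P (i+1)).degree (β (i+1) • P i).degree := degree_add_le _ _
        _ ≤ ((i+1 : ℕ) : WithBot ℕ) := by
            apply max_le
            · exact le_trans (degree_smul_le _ _) (le_of_eq (hdeg (i+1)))
            · exact le_trans (degree_smul_le _ _)
                (le_trans (le_of_eq (hdeg i)) (by exact_mod_cast Nat.le_succ i))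
    have hor : ∀ k, k < i + 2 → ip R (P k) = 0 := by
      intro k hk
      have hexp : ip R (P k) = ip (X * P (i+1)) (P k) - ip (P (i+2)) (P k)
          - (a (i+1) * ip (P (i+1)) (P k) + β (i+1) * ip (P i) (P k)) := by
        rw [hR, ip_sub, ip_sub, ip_add, ip_smul, ip_smul]
      rw [hexp]
      have hP2k : ip (P (i+2)) (P k) = 0 :=
        horth _ _ (by rw [hdeg k]; exact_mod_cast hk)
      rcases Nat.lt_or_ge k i with hki | hki
      · have h1 : ip (X * P (i+1)) (P k) = 0 := by
          rw [ip_Xmul]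
          exact horth (i+1) _ (by rw [hXP_deg k]; exact_mod_cast (by omega : k+1 < i+1))
        have h2 : ip (P (i+1)) (P k) = 0 :=
          horth _ _ (by rw [hdeg k]; exact_mod_cast (by omega : k < i+1))
        have h3 : ip (P i) (P k) = 0 := horth _ _ (by rw [hdeg k]; exact_mod_cast hki)
        rw [h1, h2, h3, hP2k]; ring
      · rcases (by omega : k = i ∨ k = i + 1) with rfl | rfl
        · have h1 : ip (X * P (k+1)) (P k) = ip (P (k+1)) (P (k+1)) := by
            rw [ip_Xmul]; exact key2 k
          have h2 : ip (P (k+1)) (P k) = 0 :=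
            horth _ _ (by rw [hdeg k]; exact_mod_cast Nat.lt_succ_self k)
          have h3 : β (k+1) * ip (P k) (P k) = ip (P (k+1)) (P (k+1)) := by
            rw [hβ' k]; exact div_mul_cancel₀ _ (hPP_pos k).ne'
          rw [h1, h2, hP2k, h3]; ring
        · have h1 := key_XPi_Pim1 (i+1)
          have h2 : ip (P i) (P (i+1)) = 0 := by
            rw [ip_comm]
            exact horth (i+1) _ (by rw [hdeg i]; exact_mod_cast Nat.lt_succ_self i)
          rw [h1, h2, hP2k]; ring
    have hz := hzero (i+2) R hdR hor
    rw [hR] at hz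
    linear_combination (norm := ring_nf) hz
  -- normalized quantities
  set s : ℕ → ℝ := fun i => Real.sqrt (ip (P i) (P i)) with hs
  have s_pos : ∀ i, 0 < s i := fun i => Real.sqrt_pos.mpr (hPP_pos i)
  have s_sq : ∀ i, s i ^ 2 = ip (P i) (P i) := fun i => Real.sq_sqrt (hPP_pos i).le
  set V : ℕ → ℝ := fun k => (π k).eval lam with hV
  have hPeval : ∀ k, (P k).eval lam = s k * V k := by
    intro k
    rw [hV]
    simp only [hπ k, eval_smul, smul_eq_mul, hs]
    rw [← mul_assoc, mul_inv_cancel₀ (s_pos k).ne', one_mul]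
  have hβpos : ∀ i, 0 < β (i+1) := by
    intro i; rw [hβ' i]; exact div_pos (hPP_pos (i+1)) (hPP_pos i)
  have hββ : ∀ i, Real.sqrt (β (i+1)) ^ 2 = β (i+1) := fun i => Real.sq_sqrt (hβpos i).le
  have hsβ : ∀ i, Real.sqrt (β (i+1)) * s i = s (i+1) := by
    intro i
    rw [hs]
    rw [← Real.sqrt_mul (hβpos i).le]
    congr 1
    rw [hβ' i]
    exact div_mul_cancel₀ _ (hPP_pos i).ne'
  -- α = a
  have hα_a : ∀ i, α i = a i := by
    intro i
    have h1 : X * ((s i)⁻¹ • P i) = (s i)⁻¹ • (X * P i) := by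
      rw [mul_smul_comm]
    have h2 : ip (X * π i) (π i) = (s i)⁻¹ * ((s i)⁻¹ * ip (X * P i) (P i)) := by
      rw [hπ i, h1, ip_smul, ip_comm _ ((s i)⁻¹ • P i), ip_smul, ip_comm]
    rw [hα i, h2, ha]
    rw [eq_div_iff (hPP_pos i).ne', ← s_sq i]
    field_simp
    rw [mul_div_cancel_left₀ _ (s_pos i).ne']
  -- evaluated monic recurrence
  have E : ∀ i : ℕ, lam * (s (i+1) * V (i+1)) =
      s (i+2) * V (i+2) + (a (i+1) * (s (i+1) * V (i+1)) + β (i+1) * (s i * V i)) := by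
    intro i
    have := congrArg (Polynomial.eval lam) (hrec i)
    simpa [eval_mul, eval_add, eval_smul, smul_eq_mul, hPeval] using this
  have E0 : lam * (s 0 * V 0) = s 1 * V 1 + a 0 * (s 0 * V 0) := by
    have := congrArg (Polynomial.eval lam) hrec0
    simpa [eval_mul, eval_add, eval_smul, smul_eq_mul, hPeval] using this
  -- normalized recurrence
  have hVrec : ∀ i : ℕ, lam * V (i+1) =
      Real.sqrt (β (i+2)) * V (i+2) + α (i+1) * V (i+1) + Real.sqrt (β (i+1)) * V i := by
    intro i
    rw [hα_a]
    apply mul_left_cancel₀ (s_pos (i+1)).ne'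
    have T1 := hsβ (i+1)
    have T2 := hsβ i
    have T3 := hββ i
    linear_combination E i - V (i+2) * T1 + V i * Real.sqrt (β (i+1)) * T2 - V i * s i * T3
  have hVrec0 : lam * V 0 = Real.sqrt (β 1) * V 1 + α 0 * V 0 := by
    rw [hα_a]
    apply mul_left_cancel₀ (s_pos 0).ne'
    have T2 := hsβ 0
    linear_combination E0 - V 1 * T2
  -- V 0 = 1
  have hP0 : P 0 = 1 := (hmonic 0).natDegree_eq_zero.mp (hndeg 0)
  have hip11 : ip (P 0) (P 0) = 1 := by
    rw [hP0, hip 1 1]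
    simp
  have hV0 : V 0 = 1 := by
    rw [hV]
    simp only [hπ 0, hip11]
    rw [hP0]
    simp
  have hsqβ_pos : ∀ i, 0 < Real.sqrt (β (i+1)) := fun i => Real.sqrt_pos.mpr (hβpos i)
  -- extension of a vector by zero
  set W : (Fin n → ℝ) → ℕ → ℝ := fun w k => if h : k < n then w ⟨k, h⟩ else 0 with hW
  -- row formula
  have hrowW : ∀ (w : Fin n → ℝ) (i : Fin n), (J.mulVec w) i =
      Real.sqrt (β ((i:ℕ)+1)) * W w ((i:ℕ)+1) + α i.val * w i
      + (if (i:ℕ) = 0 then 0 else Real.sqrt (β (i:ℕ)) * W w ((i:ℕ)-1)) := by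
    intro w i
    have hmv : (J.mulVec w) i = ∑ j : Fin n, J i j * w j := by
      simp [Matrix.mulVec, dotProduct]
    have hsplit : ∀ j : Fin n, J i j * w j =
        (if j = i then α i.val * w j else 0)
      + ((if (j:ℕ) + 1 = (i:ℕ) then Real.sqrt (β (i:ℕ)) * w j else 0)
      + (if (i:ℕ) + 1 = (j:ℕ) then Real.sqrt (β ((i:ℕ)+1)) * w j else 0)) := by
      intro j
      rw [hJ i j]
      rcases eq_or_ne i j with rfl | hij
      · simp
      · have hij' : j ≠ i := fun h => hij h.symm
        have hvij : (i:ℕ) ≠ (j:ℕ) := fun h => hij (Fin.ext h)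
        simp only [if_neg hij, if_neg hij']
        by_cases h1 : (i:ℕ) + 1 = (j:ℕ)
        · have h2 : ¬ ((j:ℕ) + 1 = (i:ℕ)) := by omega
          have hmax : max (i:ℕ) (j:ℕ) = (i:ℕ) + 1 := by omega
          simp [h1, h2, hmax]
        · by_cases h2 : (j:ℕ) + 1 = (i:ℕ)
          · have hmax : max (i:ℕ) (j:ℕ) = (i:ℕ) := by omega
            simp [h1, h2, hmax]
          · simp [h1, h2]
    rw [hmv, Finset.sum_congr rfl (fun j _ => hsplit j), Finset.sum_add_distrib,
      Finset.sum_add_distrib]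
    have hA : (∑ j : Fin n, if j = i then α i.val * w j else 0) = α i.val * w i := by
      rw [Finset.sum_ite_eq' Finset.univ i (fun j => α i.val * w j)]
      simp
    have hB : (∑ j : Fin n, if (j:ℕ) + 1 = (i:ℕ) then Real.sqrt (β (i:ℕ)) * w j else 0)
        = (if (i:ℕ) = 0 then 0 else Real.sqrt (β (i:ℕ)) * W w ((i:ℕ)-1)) := by
      by_cases h0 : (i:ℕ) = 0
      · rw [if_pos h0]
        apply Finset.sum_eq_zero
        intro j _
        rw [if_neg (by omega)]
      · rw [if_neg h0]
        have hlt : (i:ℕ) - 1 < n := by omega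
        set i' : Fin n := ⟨(i:ℕ)-1, hlt⟩ with hi'
        have : ∀ j : Fin n, ((j:ℕ) + 1 = (i:ℕ)) ↔ (j = i') := by
          intro j
          rw [Fin.ext_iff]
          simp only [hi']
          omega
        rw [Finset.sum_congr rfl (fun j _ => if_congr (this j) rfl rfl),
          Finset.sum_ite_eq' Finset.univ i' (fun j => Real.sqrt (β (i:ℕ)) * w j)]
        simp only [Finset.mem_univ, if_true]
        rw [hW]
        simp only [hlt, dif_pos]
        rfl
    have hC : (∑ j : Fin n, if (i:ℕ) + 1 = (j:ℕ) then Real.sqrt (β ((i:ℕ)+1)) * w j else 0)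
        = Real.sqrt (β ((i:ℕ)+1)) * W w ((i:ℕ)+1) := by
      by_cases hlt : (i:ℕ) + 1 < n
      · set i' : Fin n := ⟨(i:ℕ)+1, hlt⟩ with hi'
        have : ∀ j : Fin n, ((i:ℕ) + 1 = (j:ℕ)) ↔ (j = i') := by
          intro j
          rw [Fin.ext_iff]
          simp only [hi']
          omega
        rw [Finset.sum_congr rfl (fun j _ => if_congr (this j) rfl rfl),
          Finset.sum_ite_eq' Finset.univ i' (fun j => Real.sqrt (β ((i:ℕ)+1)) * w j)]
        simp only [Finset.mem_univ, if_true]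
        rw [hW]
        simp only [hlt, dif_pos]
        rfl
      · have h1 : (∑ j : Fin n, if (i:ℕ) + 1 = (j:ℕ) then Real.sqrt (β ((i:ℕ)+1)) * w j else 0) = 0 := by
          apply Finset.sum_eq_zero
          intro j _
          rw [if_neg (by have := j.isLt; omega)]
        rw [h1, hW]
        simp only [hlt, dif_neg, not_false_iff]
        ring
    rw [hA, hB, hC]
    ring
  -- the eigenvector of values
  set v : Fin n → ℝ := fun j => V (j:ℕ) with hvdef
  have hWv : ∀ k : ℕ, k ≤ n → W v k = V k := by
    intro k hk
    rw [hW]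
    rcases lt_or_eq_of_le hk with h | h
    · simp only [h, dif_pos]
      rfl
    · subst h
      simp only [lt_irrefl, dif_neg, not_false_iff]
      rw [hV]
      exact hroot.symm
  have hWv' : ∀ k : ℕ, k < n → W v k = V k := fun k hk => hWv k hk.le
  have hv : J.mulVec v = lam • v := by
    funext i
    rw [hrowW v i]
    have h1 : W v ((i:ℕ)+1) = V ((i:ℕ)+1) := hWv _ (by have := i.isLt; omega)
    rw [h1]
    have hvi : v i = V (i:ℕ) := rfl
    rcases Nat.eq_zero_or_pos (i:ℕ) with h0 | h0
    · rw [if_pos h0, hvi, h0]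
      simp only [Pi.smul_apply, smul_eq_mul, hvi, h0]
      rw [← hVrec0]
      ring
    · obtain ⟨k, hk⟩ : ∃ k, (i:ℕ) = k + 1 := ⟨(i:ℕ)-1, by omega⟩
      rw [if_neg (by omega), hvi, hk]
      have h2 : W v (k+1-1) = V k := by
        have he : k+1-1 = k := rfl
        rw [he, hWv' _ (by have := i.isLt; omega)]
      rw [h2]
      simp only [Pi.smul_apply, smul_eq_mul, hvi, hk]
      linarith [hVrec k]
  -- uniqueness of eigenvector given first component
  have huniq : ∀ w : Fin n → ℝ, J.mulVec w = lam • w → w ⟨0, hn⟩ = 0 → ∀ i : Fin n, w i = 0 := by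
    intro w hw h0
    have key : ∀ k : ℕ, ∀ h : k < n, w ⟨k, h⟩ = 0 := by
      intro k
      induction k using Nat.strong_induction_on with
      | _ k ih =>
        intro h
        match k, ih with
        | 0, _ => exact h0
        | (m+1), ih =>
          have hm : m < n := by omega
          set i : Fin n := ⟨m, hm⟩ with hi
          have hrow := hrowW w i
          rw [hw] at hrow
          have h1 : w i = 0 := ih m (by omega) hm
          have h2 : (if (i:ℕ) = 0 then 0 else Real.sqrt (β (i:ℕ)) * W w ((i:ℕ)-1)) = 0 := by
            rcases Nat.eq_zero_or_pos m with rfl | hmpos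
            · simp [hi]
            · rw [if_neg (by simp [hi]; omega)]
              have : W w ((i:ℕ)-1) = 0 := by
                rw [hW]
                have hlt : (i:ℕ)-1 < n := by omega
                simp only [hlt, dif_pos]
                exact ih ((i:ℕ)-1) (by simp [hi]) hlt
              rw [this]; ring
          have h3 : W w ((i:ℕ)+1) = w ⟨m+1, h⟩ := by
            rw [hW]
            have : (i:ℕ)+1 < n := by simp [hi]; omega
            simp only [this, dif_pos]
            rfl
          have h4 : (lam • w) i = lam * w i := rfl
          rw [h4, h1, h2, h3] at hrow
          have h5 : Real.sqrt (β ((i:ℕ)+1)) * w ⟨m+1, h⟩ = 0 := by linarith [hrow]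
          have := mul_eq_zero.mp h5
          rcases this with h6 | h6
          · exact absurd h6 (hsqβ_pos (i:ℕ)).ne'
          · exact h6
    intro i
    have := key (i:ℕ) i.isLt
    simpa using this
  -- combine
  set c : ℝ := q ⟨0, hn⟩ with hc
  have hveq : ∀ i : Fin n, q i = c * v i := by
    have hwe : J.mulVec (q - c • v) = lam • (q - c • v) := by
      rw [Matrix.mulVec_sub, Matrix.mulVec_smul, hq, hv, smul_sub, smul_comm]
    have hw0 : (q - c • v) ⟨0, hn⟩ = 0 := by
      have hv0 : v ⟨0, hn⟩ = 1 := by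
        rw [hvdef]; exact hV0
      simp [hv0, hc]
    have := huniq _ hwe hw0
    intro i
    have h := this i
    simp only [Pi.sub_apply, Pi.smul_apply, smul_eq_mul] at h
    linarith
  have hsum : (∑ i : Fin n, q i ^ 2) = c^2 * ∑ i : Fin n, (π i.val).eval lam ^ 2 := by
    rw [Finset.mul_sum]
    apply Finset.sum_congr rfl
    intro i _
    rw [hveq i]
    have : v i = (π i.val).eval lam := rfl
    rw [this]
    ring
  rw [hsum] at hqnorm
  have main : q ⟨0, hn⟩ ^ 2 = (∑ i : Fin n, (π i.val).eval lam ^ 2)⁻¹ :=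
    eq_inv_of_mul_eq_one_left hqnorm
  exact ⟨main, by rw [hν]; exact main⟩
end

section
/- (Theorem 1: Lanczos equals Stieltjes with a discrete inner product.) For every 0 ≤ i ≤ m−1, the i-th Lanczos vector satisfies v_i = (√ν_0 · φ_i(f_0), …, √ν_{m−1} · φ_i(f_{m−1})), the Lanczos diagonal coefficient satisfies α_i = Σ_{j=0}^{m−1} f_j φ_i(f_j)² ν_j = ⟨X·φ_i, φ_i⟩, and for 1 ≤ i ≤ m−1 the off-diagonal coefficient satisfies η_i = ⟨φ̄_i, φ̄_i⟩^{1/2} / ⟨φ̄_{i−1}, φ̄_{i−1}⟩^{1/2}; that is, the Lanczos iteration on the diagonal matrix A with starting vector (√ν_j)_j produces exactly the recurrence coefficients and (weight-scaled) evaluations of the polynomials orthonormal with respect to the discrete measure Σ_j ν_j δ_{f_j}. -/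
open Polynomial

/-- Theorem 1: Lanczos' method on the diagonal matrix
A = diag(f_0,…,f_{m−1}) with starting vector (√ν_j)_j is equivalent to the
Stieltjes procedure with the discrete inner product: the Lanczos vectors are
the weight-scaled evaluations of the orthonormal polynomials, and the Lanczos
coefficients are the recurrence coefficients of those polynomials. -/
theorem lanczos_eq_stieltjes_discrete
    (m : ℕ) (hm : 1 ≤ m)
    (f : Fin m → ℝ) (hf : Function.Injective f)
    (ν : Fin m → ℝ) (hνpos : ∀ j, 0 < ν j) (hνsum : ∑ j : Fin m, ν j = 1)
    (ip : ℝ[X] → ℝ[X] → ℝ)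
    (hip : ∀ p q : ℝ[X], ip p q = ∑ j : Fin m, p.eval (f j) * q.eval (f j) * ν j)
    (Pb : ℕ → ℝ[X])
    (hmonic : ∀ i : ℕ, i < m → (Pb i).Monic)
    (hdeg : ∀ i : ℕ, i < m → (Pb i).degree = i)
    (horth : ∀ i : ℕ, i < m → ∀ q : ℝ[X], q.degree < (i : ℕ) → ip (Pb i) q = 0)
    (φ : ℕ → ℝ[X])
    (hφ : ∀ i : ℕ, i < m → φ i = (Real.sqrt (ip (Pb i) (Pb i)))⁻¹ • Pb i)
    -- the Lanczos iteration: vt is ṽ, v the normalized Lanczos vectors,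
    -- η the off-diagonal and a the diagonal recurrence coefficients
    (vt v : ℕ → Fin m → ℝ) (η a : ℕ → ℝ)
    (hvt0 : vt 0 = fun j => Real.sqrt (ν j))
    (hη : ∀ i : ℕ, η i = Real.sqrt (∑ j : Fin m, vt i j ^ 2))
    (hv : ∀ i : ℕ, v i = fun j => (η i)⁻¹ * vt i j)
    (ha : ∀ i : ℕ, a i = ∑ j : Fin m, v i j * (f j * v i j))
    (hvt1 : vt 1 = fun j => (f j - a 0) * v 0 j)
    (hvts : ∀ i : ℕ, 1 ≤ i →
      vt (i + 1) = fun j => (f j - a i) * v i j - η i * v (i - 1) j) :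
    (∀ i : ℕ, i < m →
      (v i = fun j => Real.sqrt (ν j) * (φ i).eval (f j)) ∧
      a i = ∑ j : Fin m, f j * (φ i).eval (f j) ^ 2 * ν j ∧
      a i = ip (X * φ i) (φ i)) ∧
    (∀ i : ℕ, 1 ≤ i → i < m →
      η i = Real.sqrt (ip (Pb i) (Pb i)) / Real.sqrt (ip (Pb (i - 1)) (Pb (i - 1)))) := by
  have hdeg' : ∀ i, i < m → (Pb i).natDegree = i := fun i hi => natDegree_eq_of_degree_eq_some (hdeg i hi)
  have hPbne : ∀ i, i < m → Pb i ≠ 0 := fun i hi => (hmonic i hi).ne_zero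
  have ip_symm : ∀ p q, ip p q = ip q p := by
    intro p q; rw [hip, hip]; exact Finset.sum_congr rfl fun j _ => by ring
  have ip_lin : ∀ (p q r : ℝ[X]) (c : ℝ), ip (p + C c * q) r = ip p r + c * ip q r := by
    intro p q r c
    rw [hip, hip, hip, Finset.mul_sum, ← Finset.sum_add_distrib]
    exact Finset.sum_congr rfl fun j _ => by simp [eval_add, eval_mul]; ring
  have ip_linR : ∀ (p q r : ℝ[X]) (c : ℝ), ip r (p + C c * q) = ip r p + c * ip r q := by
    intro p q r c; rw [ip_symm, ip_lin, ip_symm r p, ip_symm r q]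
  have ip_Xswap : ∀ p q, ip (X * p) q = ip p (X * q) := by
    intro p q; rw [hip, hip]; exact Finset.sum_congr rfl fun j _ => by simp only [eval_mul, eval_X]; ring
  have ip_zeroR : ∀ p, ip p 0 = 0 := by intro p; rw [hip]; simp
  have hdef : ∀ Q : ℝ[X], Q.natDegree < m → ip Q Q = 0 → Q = 0 := by
    intro Q hQd hQ0
    rw [hip] at hQ0
    have hall : ∀ j ∈ Finset.univ, Q.eval (f j) * Q.eval (f j) * ν j = 0 := by
      rw [← Finset.sum_eq_zero_iff_of_nonneg]
      · exact hQ0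
      · intro j _; have := (hνpos j).le; nlinarith [sq_nonneg (Q.eval (f j))]
    have heval : ∀ j, Q.eval (f j) = 0 := by
      intro j
      have h1 := hall j (Finset.mem_univ j)
      rcases mul_eq_zero.mp h1 with h | h
      · exact mul_self_eq_zero.mp h
      · exact absurd h (hνpos j).ne'
    exact Q.eq_zero_of_natDegree_lt_card_of_eval_eq_zero hf heval (by simpa using hQd)
  have hposd : ∀ i, i < m → 0 < ip (Pb i) (Pb i) := by
    intro i hi
    have hnn : (0:ℝ) ≤ ip (Pb i) (Pb i) := by
      rw [hip]
      exact Finset.sum_nonneg fun j _ => mul_nonneg (mul_self_nonneg _) (hνpos j).le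
    rcases lt_or_eq_of_le hnn with h | h
    · exact h
    · exact absurd (hdef (Pb i) (by rw [hdeg' i hi]; exact hi) h.symm) (hPbne i hi)
  have hPb0 : Pb 0 = 1 := by
    have := hdeg' 0 hm
    exact ((hmonic 0 hm).natDegree_eq_zero).mp this
  have ip_zero_of_orth : ∀ (n : ℕ), n ≤ m → ∀ Q : ℝ[X],
      (∀ k, k < n → ip Q (Pb k) = 0) → ∀ q : ℝ[X], q.degree < (n : ℕ) → ip Q q = 0 := by
    intro n hn Q hQ
    suffices h : ∀ d (q : ℝ[X]), q.natDegree ≤ d → q.degree < (n : ℕ) → ip Q q = 0 by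
      intro q hq; exact h q.natDegree q le_rfl hq
    intro d
    induction d with
    | zero =>
      intro q hq hqd
      by_cases hq0 : q = 0
      · rw [hq0]; exact ip_zeroR Q
      · have hn0 : 0 < n := by
          by_contra h0
          simp only [Nat.le_zero.mp (Nat.not_lt.mp h0), Nat.cast_zero] at hqd
          exact hq0 (degree_eq_bot.mp (Nat.WithBot.lt_zero_iff.mp hqd))
        have hqC : q = C (q.coeff 0) := eq_C_of_natDegree_le_zero hq
        have h0 : ip Q (Pb 0) = 0 := hQ 0 hn0
        calc ip Q q = ip Q (0 + C (q.coeff 0) * Pb 0) := by rw [hPb0]; rw [← hqC]; ring_nf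
          _ = ip Q 0 + q.coeff 0 * ip Q (Pb 0) := ip_linR _ _ _ _
          _ = 0 := by rw [h0, ip_zeroR]; ring
    | succ d ihd =>
      intro q hq hqd
      by_cases hq0 : q = 0
      · rw [hq0]; exact ip_zeroR Q
      by_cases hqd' : q.natDegree ≤ d
      · exact ihd q hqd' hqd
      have hqdeq : q.natDegree = d + 1 := le_antisymm hq (Nat.not_le.mp hqd')
      have hdn : d + 1 < n := by
        have : q.degree = (d + 1 : ℕ) := by rw [degree_eq_natDegree hq0, hqdeq]
        rw [this] at hqd; exact_mod_cast hqd
      have hdm : d + 1 < m := lt_of_lt_of_le hdn hn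
      have hlc : q.leadingCoeff ≠ 0 := leadingCoeff_ne_zero.mpr hq0
      set q' := q - C q.leadingCoeff * Pb (d + 1) with hq'
      have hdq' : q'.degree < q.degree := by
        apply degree_sub_lt
        · rw [degree_C_mul hlc, hdeg (d+1) hdm, degree_eq_natDegree hq0, hqdeq]
        · exact hq0
        · rw [leadingCoeff_mul, leadingCoeff_C, (hmonic (d+1) hdm).leadingCoeff, mul_one]
      have hq'd : q'.natDegree ≤ d := by
        by_cases hq'0 : q' = 0
        · rw [hq'0]; simp
        · have := (natDegree_lt_iff_degree_lt hq'0).mpr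
            (by rw [degree_eq_natDegree hq0, hqdeq] at hdq'; exact_mod_cast hdq')
          omega
      have hq'lt : q'.degree < (n : ℕ) := lt_trans hdq' hqd
      calc ip Q q = ip Q (q' + C q.leadingCoeff * Pb (d + 1)) := by rw [hq']; ring_nf
        _ = ip Q q' + q.leadingCoeff * ip Q (Pb (d + 1)) := ip_linR _ _ _ _
        _ = 0 := by rw [ihd q' hq'd hq'lt, hQ (d+1) hdn]; ring
  have hCmul_le : ∀ (c : ℝ) (p : ℝ[X]), (C c * p).degree ≤ p.degree := fun c p =>
    (degree_mul_le _ _).trans (by simpa using add_le_add (degree_C_le (R := ℝ) (a := c)) (le_refl p.degree))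
  have mkzero : ∀ (n : ℕ) (Q : ℝ[X]), n + 1 ≤ m → Q.degree < ((n+1 : ℕ) : WithBot ℕ) →
      (∀ k, k < n + 1 → ip Q (Pb k) = 0) → Q = 0 := by
    intro n Q hnm hQd hQorth
    by_cases hQ0 : Q = 0
    · exact hQ0
    · exact hdef Q (by have := (natDegree_lt_iff_degree_lt hQ0).mpr hQd; omega)
        (ip_zero_of_orth (n+1) hnm Q hQorth Q hQd)
  have hrec0 : 1 < m → Pb 1 = (X - C (ip (X * Pb 0) (Pb 0) / ip (Pb 0) (Pb 0))) * Pb 0 := by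
    intro h1m
    have ht0 : ip (Pb 0) (Pb 0) ≠ 0 := (hposd 0 hm).ne'
    set α := ip (X * Pb 0) (Pb 0) / ip (Pb 0) (Pb 0) with hα
    set Q := Pb 1 - (X - C α) * Pb 0 with hQdef
    have hQform : Q = (Pb 1 + C (-1) * (X * Pb 0)) + C α * Pb 0 := by
      rw [hQdef]; simp only [map_neg, map_one]; ring
    have hdQ : Q.degree < ((1:ℕ) : WithBot ℕ) := by
      have hXP : (X - C α) * Pb 0 = X - C α := by rw [hPb0, mul_one]
      have h := degree_sub_lt (p := Pb 1) (q := (X - C α) * Pb 0)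
        (by rw [hdeg 1 h1m, hXP, degree_X_sub_C]; norm_cast)
        (hPbne 1 h1m)
        (by rw [(hmonic 1 h1m).leadingCoeff, hXP, (monic_X_sub_C α).leadingCoeff])
      rwa [hdeg 1 h1m] at h
    have hQorth : ∀ k, k < 1 → ip Q (Pb k) = 0 := by
      intro k hk
      interval_cases k
      have e : ip Q (Pb 0) = ip (Pb 1) (Pb 0) - ip (X * Pb 0) (Pb 0) + α * ip (Pb 0) (Pb 0) := by
        rw [hQform, ip_lin, ip_lin]; ring
      have T1 : ip (Pb 1) (Pb 0) = 0 := horth 1 h1m _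
        (by rw [hdeg 0 hm]; exact_mod_cast Nat.zero_lt_one)
      rw [e, T1, hα]; field_simp; ring
    have hQ0 : Q = 0 := mkzero 0 Q (by omega) hdQ hQorth
    rw [hQdef] at hQ0; exact sub_eq_zero.mp hQ0
  have hrec : ∀ k, k + 2 < m →
      Pb (k+2) = (X - C (ip (X * Pb (k+1)) (Pb (k+1)) / ip (Pb (k+1)) (Pb (k+1)))) * Pb (k+1)
        - C (ip (Pb (k+1)) (Pb (k+1)) / ip (Pb k) (Pb k)) * Pb k := by
    intro k hkm
    have hk1 : k + 1 < m := by omega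
    have hk0 : k < m := by omega
    have ht0 : ip (Pb (k+1)) (Pb (k+1)) ≠ 0 := (hposd (k+1) hk1).ne'
    have hu0 : ip (Pb k) (Pb k) ≠ 0 := (hposd k hk0).ne'
    set s := ip (X * Pb (k+1)) (Pb (k+1)) with hs
    set t := ip (Pb (k+1)) (Pb (k+1)) with ht
    set u := ip (Pb k) (Pb k) with hu
    set Q := Pb (k+2) - ((X - C (s/t)) * Pb (k+1) - C (t/u) * Pb k) with hQdef
    have hQform : Q = ((Pb (k+2) + C (-1) * (X * Pb (k+1))) + C (s/t) * Pb (k+1)) + C (t/u) * Pb k := by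
      rw [hQdef]; simp only [map_neg, map_one]; ring
    have hdX1 : (X * Pb (k+1)).degree = ((k+2:ℕ) : WithBot ℕ) := by
      rw [degree_mul, degree_X, hdeg (k+1) hk1]; exact_mod_cast (show 1 + (k+1) = k+2 by omega)
    have hd1 : (Pb (k+2) - X * Pb (k+1)).degree < ((k+2:ℕ) : WithBot ℕ) := by
      have h := degree_sub_lt (p := Pb (k+2)) (q := X * Pb (k+1))
        (by rw [hdeg (k+2) hkm, hdX1]) (hPbne (k+2) hkm)
        (by rw [(hmonic (k+2) hkm).leadingCoeff, leadingCoeff_mul, leadingCoeff_X,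
            (hmonic (k+1) hk1).leadingCoeff]; ring)
      rwa [hdeg (k+2) hkm] at h
    have hdQ : Q.degree < ((k+2:ℕ) : WithBot ℕ) := by
      have hQform2 : Q = ((Pb (k+2) - X * Pb (k+1)) + C (s/t) * Pb (k+1)) + C (t/u) * Pb k := by
        rw [hQdef]; ring
      rw [hQform2]
      refine lt_of_le_of_lt (degree_add_le _ _) (max_lt (lt_of_le_of_lt (degree_add_le _ _)
        (max_lt hd1 (lt_of_le_of_lt (hCmul_le _ _) ?_))) (lt_of_le_of_lt (hCmul_le _ _) ?_))
      · rw [hdeg (k+1) hk1]; exact_mod_cast Nat.lt_succ_self (k+1)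
      · rw [hdeg k hk0]; exact_mod_cast (by omega : k < k + 2)
    have hQorth : ∀ j, j < k + 2 → ip Q (Pb j) = 0 := by
      intro j hj
      have hjm : j < m := by omega
      have e : ip Q (Pb j) = ip (Pb (k+2)) (Pb j) - ip (X * Pb (k+1)) (Pb j)
          + (s/t) * ip (Pb (k+1)) (Pb j) + (t/u) * ip (Pb k) (Pb j) := by
        rw [hQform, ip_lin, ip_lin, ip_lin]; ring
      have T1 : ip (Pb (k+2)) (Pb j) = 0 := horth (k+2) hkm _
        (by rw [hdeg j hjm]; exact_mod_cast hj)
      rcases Nat.lt_or_ge j k with hjk | hjk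
      · have T2 : ip (X * Pb (k+1)) (Pb j) = 0 := by
          rw [ip_Xswap]
          exact horth (k+1) hk1 _ (by rw [degree_mul, degree_X, hdeg j hjm]; exact_mod_cast (show 1 + j < k + 1 by omega))
        have T3 : ip (Pb (k+1)) (Pb j) = 0 := horth (k+1) hk1 _
          (by rw [hdeg j hjm]; exact_mod_cast (show j < k + 1 by omega))
        have T4 : ip (Pb k) (Pb j) = 0 := horth k hk0 _
          (by rw [hdeg j hjm]; exact_mod_cast hjk)
        rw [e, T1, T2, T3, T4]; ring
      rcases Nat.eq_or_lt_of_le hjk with hje | hjk'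
      · obtain rfl := hje
        have hdXk : (X * Pb k).degree = ((k+1:ℕ) : WithBot ℕ) := by
          rw [degree_mul, degree_X, hdeg k hk0]; exact_mod_cast (show 1 + k = k+1 by omega)
        have hrXk : X * Pb k = Pb (k+1) + C 1 * (X * Pb k - Pb (k+1)) := by
          simp only [map_one]; ring
        have hdr : (X * Pb k - Pb (k+1)).degree < ((k+1:ℕ) : WithBot ℕ) := by
          have h := degree_sub_lt (p := X * Pb k) (q := Pb (k+1))
            (by rw [hdXk, hdeg (k+1) hk1]) (mul_ne_zero X_ne_zero (hPbne k hk0))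
            (by rw [leadingCoeff_mul, leadingCoeff_X, (hmonic k hk0).leadingCoeff,
                (hmonic (k+1) hk1).leadingCoeff]; ring)
          rwa [hdXk] at h
        have T2 : ip (X * Pb (k+1)) (Pb k) = t := by
          rw [ip_Xswap, hrXk, ip_linR, horth (k+1) hk1 _ hdr]; ring
        have T3 : ip (Pb (k+1)) (Pb k) = 0 := horth (k+1) hk1 _
          (by rw [hdeg k hk0]; exact_mod_cast Nat.lt_succ_self k)
        rw [e, T1, T2, T3, ← hu]; field_simp; ring
      · have hje : j = k + 1 := by omega
        obtain rfl := hje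
        have T4 : ip (Pb k) (Pb (k+1)) = 0 := by
          rw [ip_symm]
          exact horth (k+1) hk1 _ (by rw [hdeg k hk0]; exact_mod_cast Nat.lt_succ_self k)
        rw [e, T1, T4, ← ht, ← hs]; field_simp; ring
    have hQ0 : Q = 0 := mkzero (k+1) Q (by omega) hdQ hQorth
    rw [hQdef] at hQ0; exact sub_eq_zero.mp hQ0
  set Nn : ℕ → ℝ := fun i => Real.sqrt (ip (Pb i) (Pb i)) with hNn
  have hNpos : ∀ i, i < m → 0 < Nn i := fun i hi => Real.sqrt_pos.mpr (hposd i hi)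
  have hNsq : ∀ i, i < m → Nn i ^ 2 = ip (Pb i) (Pb i) := fun i hi =>
    Real.sq_sqrt (hposd i hi).le
  -- the coefficient appearing in the induction claim
  set cf : ℕ → ℝ := fun i => if i = 0 then 1 else (Nn (i-1))⁻¹ with hcf
  have hcfpos : ∀ i, i < m → 0 < cf i := by
    intro i hi
    by_cases h0 : i = 0
    · simp [hcf, h0]
    · simp only [hcf, if_neg h0]
      exact inv_pos.mpr (hNpos (i-1) (by omega))
  have step : ∀ i, i < m →
      vt i = (fun j => cf i * (Real.sqrt (ν j) * (Pb i).eval (f j))) →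
      η i = cf i * Nn i ∧ v i = (fun j => Real.sqrt (ν j) * (φ i).eval (f j)) := by
    intro i hi hvti
    have hc := hcfpos i hi
    have hsum : ∑ j : Fin m, vt i j ^ 2 = cf i ^ 2 * ip (Pb i) (Pb i) := by
      rw [hip, Finset.mul_sum]
      refine Finset.sum_congr rfl fun j _ => ?_
      rw [hvti]
      have h1 : (cf i * (Real.sqrt (ν j) * (Pb i).eval (f j))) ^ 2
          = cf i ^ 2 * ((Pb i).eval (f j) * (Pb i).eval (f j) * (Real.sqrt (ν j) ^ 2)) := by ring
      rw [h1, Real.sq_sqrt (hνpos j).le]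
    have hηi : η i = cf i * Nn i := by
      rw [hη, hsum, Real.sqrt_mul (sq_nonneg _), Real.sqrt_sq hc.le, hNn]
    refine ⟨hηi, ?_⟩
    rw [hv, hηi]
    funext j
    rw [hvti, hφ i hi]
    simp only [eval_smul, smul_eq_mul]
    have hc' : cf i ≠ 0 := hc.ne'
    have hN' : Nn i ≠ 0 := (hNpos i hi).ne'
    rw [show Real.sqrt (ip (Pb i) (Pb i)) = Nn i from rfl]
    field_simp
  have aval : ∀ i, i < m → v i = (fun j => Real.sqrt (ν j) * (φ i).eval (f j)) →
      a i = ∑ j : Fin m, f j * (φ i).eval (f j) ^ 2 * ν j ∧ a i = ip (X * φ i) (φ i) := by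
    intro i hi hvi
    have h1 : a i = ∑ j : Fin m, f j * (φ i).eval (f j) ^ 2 * ν j := by
      rw [ha]
      refine Finset.sum_congr rfl fun j _ => ?_
      rw [hvi]
      have h2 : Real.sqrt (ν j) * (φ i).eval (f j) * (f j * (Real.sqrt (ν j) * (φ i).eval (f j)))
          = f j * (φ i).eval (f j) ^ 2 * Real.sqrt (ν j) ^ 2 := by ring
      rw [h2, Real.sq_sqrt (hνpos j).le]
    refine ⟨h1, ?_⟩
    rw [h1, hip]
    refine Finset.sum_congr rfl fun j _ => ?_
    simp only [eval_mul, eval_X]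
    ring
  have aPb : ∀ i, i < m → a i = ip (X * φ i) (φ i) →
      a i = ip (X * Pb i) (Pb i) / ip (Pb i) (Pb i) := by
    intro i hi hai
    have hsc : ip (X * ((Nn i)⁻¹ • Pb i)) ((Nn i)⁻¹ • Pb i)
        = ((Nn i)⁻¹)^2 * ip (X * Pb i) (Pb i) := by
      rw [hip, hip, Finset.mul_sum]
      refine Finset.sum_congr rfl fun j _ => ?_
      simp only [eval_mul, eval_X, eval_smul, smul_eq_mul]
      ring
    rw [hai, hφ i hi, hsc]
    rw [inv_pow, hNsq i hi, inv_mul_eq_div]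
  -- the key induction
  have key : ∀ i, i < m → vt i = fun j => cf i * (Real.sqrt (ν j) * (Pb i).eval (f j)) := by
    intro i
    induction i using Nat.strong_induction_on with
    | _ i ih =>
      match i with
      | 0 =>
        intro _
        rw [hvt0]
        funext j
        simp [hcf, hPb0]
      | 1 =>
        intro h1m
        have h0m : 0 < m := by omega
        have C0 := ih 0 (by omega) h0m
        obtain ⟨hη0, hv0⟩ := step 0 h0m C0
        have ha0 : a 0 = ip (X * Pb 0) (Pb 0) / ip (Pb 0) (Pb 0) :=
          aPb 0 h0m (aval 0 h0m hv0).2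
        rw [hvt1]
        funext j
        simp only [hv0, hφ 0 h0m, eval_smul, smul_eq_mul, hcf, hrec0 h1m, ha0]
        simp only [eval_mul, eval_sub, eval_X, eval_C]
        norm_num
        ring
      | (i+2) =>
        intro him
        have hi1 : i + 1 < m := by omega
        have hi0 : i < m := by omega
        have Ck := ih (i+1) (by omega) hi1
        have Ci := ih i (by omega) hi0
        obtain ⟨hηk, hvk⟩ := step (i+1) hi1 Ck
        obtain ⟨_, hvi⟩ := step i hi0 Ci
        have hak : a (i+1) = ip (X * Pb (i+1)) (Pb (i+1)) / ip (Pb (i+1)) (Pb (i+1)) :=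
          aPb (i+1) hi1 (aval (i+1) hi1 hvk).2
        have hcfk : cf (i+1) = (Nn i)⁻¹ := by simp [hcf]
        rw [hvts (i+1) (by omega)]
        funext j
        have hsub : i + 1 - 1 = i := by omega
        rw [hsub]
        simp only [hvk, hvi, hφ (i+1) hi1, hφ i hi0, eval_smul, smul_eq_mul, hηk, hak, hcfk]
        have hcf2 : cf (i+2) = (Nn (i+1))⁻¹ := by simp [hcf]
        rw [hcf2, hrec i him]
        simp only [eval_sub, eval_mul, eval_X, eval_C]
        have e1 : Nn (i+1) ≠ 0 := (hNpos (i+1) hi1).ne'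
        have e0 : Nn i ≠ 0 := (hNpos i hi0).ne'
        rw [← hNsq (i+1) hi1, ← hNsq i hi0]
        rw [Real.sqrt_sq (hNpos (i+1) hi1).le, Real.sqrt_sq (hNpos i hi0).le]
        field_simp
  constructor
  · intro i hi
    obtain ⟨_, hvi⟩ := step i hi (key i hi)
    exact ⟨hvi, (aval i hi hvi).1, (aval i hi hvi).2⟩
  · intro i h1 him
    obtain ⟨hηi, _⟩ := step i him (key i him)
    rw [hηi, hcf]
    simp only [if_neg (by omega : ¬ i = 0)]
    rw [inv_mul_eq_div, hNn]
end

section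
/- The composite-function approximation is exact for low-degree outer functions: let 1 ≤ k ≤ m, let θ_0, …, θ_{k−1} be the k distinct real roots of φ̄_k with weights μ_l = 1 / (Σ_{i=0}^{k−1} φ_i(θ_l)²). If g is a real polynomial with deg g ≤ k−1, then with coefficients ĝ_i = Σ_{l=0}^{k−1} μ_l g(θ_l) φ_i(θ_l) for 0 ≤ i ≤ k−1, one has Σ_{i=0}^{k−1} ĝ_i φ_i(f_j) = g(f_j) for every j = 0, …, m−1. -/
open Polynomial

/-- the composite-function approximation is exact for outer
polynomial functions of degree at most k − 1. -/
theorem composite_approximation_exact_low_degree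
    (m : ℕ) (hm : 1 ≤ m)
    (f : Fin m → ℝ) (hf : Function.Injective f)
    (ν : Fin m → ℝ) (hνpos : ∀ j, 0 < ν j) (hνsum : ∑ j : Fin m, ν j = 1)
    (ip : ℝ[X] → ℝ[X] → ℝ)
    (hip : ∀ p q : ℝ[X], ip p q = ∑ j : Fin m, p.eval (f j) * q.eval (f j) * ν j)
    (Pb : ℕ → ℝ[X])
    (hmonic : ∀ i : ℕ, i ≤ m → (Pb i).Monic)
    (hdeg : ∀ i : ℕ, i ≤ m → (Pb i).degree = i)
    (horth : ∀ i : ℕ, i ≤ m → ∀ q : ℝ[X], q.degree < (i : ℕ) → ip (Pb i) q = 0)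
    (φ : ℕ → ℝ[X])
    (hφ : ∀ i : ℕ, i < m → φ i = (Real.sqrt (ip (Pb i) (Pb i)))⁻¹ • Pb i)
    (k : ℕ) (hk1 : 1 ≤ k) (hkm : k ≤ m)
    (θ : Fin k → ℝ) (hθinj : Function.Injective θ)
    (hθroot : ∀ l : Fin k, (Pb k).eval (θ l) = 0)
    (w : Fin k → ℝ)
    (hw : ∀ l : Fin k, w l = (∑ i : Fin k, (φ i.val).eval (θ l) ^ 2)⁻¹)
    (g : ℝ[X]) (hg : g.degree ≤ (k - 1 : ℕ))
    (ghat : Fin k → ℝ)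
    (hghat : ∀ i : Fin k,
      ghat i = ∑ l : Fin k, w l * g.eval (θ l) * (φ i.val).eval (θ l)) :
    ∀ j : Fin m, ∑ i : Fin k, ghat i * (φ i.val).eval (f j) = g.eval (f j) := by
  classical
  have hcard : (Finset.univ : Finset (Fin k)).card = k := by simp
  have hcardm : (Finset.univ : Finset (Fin m)).card = m := by simp
  -- basic bilinearity helpers
  have hsmul_left : ∀ (a : ℝ) (p q : ℝ[X]), ip (a • p) q = a * ip p q := by
    intro a p q
    simp only [hip, eval_smul, smul_eq_mul, Finset.mul_sum]
    exact Finset.sum_congr rfl fun j _ => by ring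
  have hsmul_right : ∀ (a : ℝ) (p q : ℝ[X]), ip p (a • q) = a * ip p q := by
    intro a p q
    simp only [hip, eval_smul, smul_eq_mul, Finset.mul_sum]
    exact Finset.sum_congr rfl fun j _ => by ring
  have hsymm : ∀ p q : ℝ[X], ip p q = ip q p := by
    intro p q
    simp only [hip]
    exact Finset.sum_congr rfl fun j _ => by ring
  have hmul_one : ∀ p q : ℝ[X], ip (p * q) 1 = ip p q := by
    intro p q
    simp only [hip, eval_mul, eval_one]
    exact Finset.sum_congr rfl fun j _ => by ring
  -- positivity of ip on nonzero polys of degree < m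
  have hpos : ∀ p : ℝ[X], p ≠ 0 → p.degree < (m : ℕ) → 0 < ip p p := by
    intro p hp hdp
    have hex : ∃ j : Fin m, p.eval (f j) ≠ 0 := by
      by_contra h
      push_neg at h
      exact hp (Polynomial.eq_zero_of_degree_lt_of_eval_index_eq_zero
        Finset.univ (hf.injOn) (by rwa [hcardm]) (fun j _ => h j))
    obtain ⟨j0, hj0⟩ := hex
    rw [hip]
    exact Finset.sum_pos'
      (fun j _ => mul_nonneg (mul_self_nonneg _) (hνpos j).le)
      ⟨j0, Finset.mem_univ j0, mul_pos (mul_self_pos.mpr hj0) (hνpos j0)⟩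
  have hPbne : ∀ i : ℕ, i ≤ m → Pb i ≠ 0 := fun i hi => (hmonic i hi).ne_zero
  have hcpos : ∀ i : ℕ, i < m → 0 < ip (Pb i) (Pb i) := fun i hi =>
    hpos (Pb i) (hPbne i hi.le) (by rw [hdeg i hi.le]; exact_mod_cast hi)
  have hkmlt : ∀ i : Fin k, i.val < m := fun i => lt_of_lt_of_le i.isLt hkm
  -- degree of φ i
  have hφdegle : ∀ i : Fin k, (φ i.val).degree ≤ ((k - 1 : ℕ) : WithBot ℕ) := by
    intro i
    rw [hφ i.val (hkmlt i)]
    refine le_trans (degree_smul_le _ _) ?_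
    rw [hdeg i.val (hkmlt i).le]
    exact_mod_cast Nat.le_sub_one_of_lt i.isLt
  have hφdegltk : ∀ i : Fin k, (φ i.val).degree < (k : ℕ) := fun i =>
    lt_of_le_of_lt (hφdegle i) (by exact_mod_cast Nat.sub_lt hk1 one_pos)
  -- orthonormality of φ under ip
  have hNorm : ∀ i i' : Fin k, ip (φ i.val) (φ i'.val) = if i = i' then 1 else 0 := by
    have key : ∀ i i' : Fin k, i'.val < i.val → ip (φ i.val) (φ i'.val) = 0 := by
      intro i i' hlt
      rw [hφ i.val (hkmlt i), hφ i'.val (hkmlt i'), hsmul_left, hsmul_right]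
      have h0 : ip (Pb i.val) (Pb i'.val) = 0 := by
        refine horth i.val (hkmlt i).le (Pb i'.val) ?_
        rw [hdeg i'.val (hkmlt i').le]
        exact_mod_cast hlt
      rw [h0]; ring
    intro i i'
    rcases lt_trichotomy i i' with h | h | h
    · rw [if_neg h.ne, hsymm]
      exact key i' i (by exact_mod_cast h)
    · subst h
      rw [if_pos rfl, hφ i.val (hkmlt i), hsmul_left, hsmul_right]
      have hc := hcpos i.val (hkmlt i)
      have hs : Real.sqrt (ip (Pb i.val) (Pb i.val)) ≠ 0 := by positivity
      rw [show ip (Pb i.val) (Pb i.val)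
        = Real.sqrt (ip (Pb i.val) (Pb i.val)) * Real.sqrt (ip (Pb i.val) (Pb i.val))
        from (Real.mul_self_sqrt hc.le).symm]
      field_simp
      rw [Real.sqrt_sq (Real.sqrt_nonneg _)]
    · rw [if_neg h.ne']
      exact key i i' (by exact_mod_cast h)
  -- Lagrange basis and Gauss weights
  set L : Fin k → ℝ[X] := fun l => Lagrange.basis Finset.univ θ l with hL
  set lam : Fin k → ℝ := fun l => ip (L l) 1 with hlam
  -- exactness for degree < k
  have exact_low : ∀ r : ℝ[X], r.degree < (k : ℕ) →
      ip r 1 = ∑ l : Fin k, r.eval (θ l) * lam l := by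
    intro r hr
    have hrint := Lagrange.eq_interpolate (v := θ) (s := Finset.univ)
      (hθinj.injOn) (by rwa [hcard])
    conv_lhs => rw [hrint]
    rw [Lagrange.interpolate_apply]
    simp only [hip, eval_finset_sum, eval_mul, eval_C, Finset.sum_mul]
    rw [Finset.sum_comm]
    refine Finset.sum_congr rfl fun l _ => ?_
    rw [show lam l = ip (L l) 1 from rfl, hip, Finset.mul_sum]
    exact Finset.sum_congr rfl fun j _ => by ring
  -- exactness for degree < 2k
  have exact_high : ∀ p : ℝ[X], p.degree < ((2 * k : ℕ) : WithBot ℕ) →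
      ip p 1 = ∑ l : Fin k, p.eval (θ l) * lam l := by
    intro p hp
    have hmk := hmonic k hkm
    have hdiv : p %ₘ Pb k + Pb k * (p /ₘ Pb k) = p := modByMonic_add_div p (Pb k)
    have hqdeg : (p /ₘ Pb k).degree < (k : ℕ) := by
      have h1 : (p /ₘ Pb k).natDegree = p.natDegree - k := by
        rw [natDegree_divByMonic p hmk, natDegree_eq_of_degree_eq_some (hdeg k hkm)]
      have h2 : p.natDegree < 2 * k := by
        by_cases hp0 : p = 0
        · simpa [hp0] using Nat.lt_of_lt_of_le one_pos (by omega)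
        · exact_mod_cast (degree_eq_natDegree hp0) ▸ hp
      refine lt_of_le_of_lt (degree_le_natDegree) ?_
      rw [h1]
      exact_mod_cast by omega
    have hrdeg : (p %ₘ Pb k).degree < (k : ℕ) := by
      have := degree_modByMonic_lt p hmk
      rwa [hdeg k hkm] at this
    have hipq : ip (Pb k * (p /ₘ Pb k)) 1 = 0 := by
      rw [hmul_one]
      exact horth k hkm _ hqdeg
    have hadd_left : ∀ p q r : ℝ[X], ip (p + q) r = ip p r + ip q r := by
      intro p q r
      simp only [hip, eval_add, ← Finset.sum_add_distrib]
      exact Finset.sum_congr rfl fun j _ => by ring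
    have hipsum : ip p 1 = ip (p %ₘ Pb k) 1 := by
      conv_lhs => rw [← hdiv]
      rw [hadd_left, hipq, add_zero]
    rw [hipsum, exact_low _ hrdeg]
    refine Finset.sum_congr rfl fun l _ => ?_
    have : (p %ₘ Pb k).eval (θ l) = p.eval (θ l) := by
      conv_rhs => rw [← hdiv]
      simp [hθroot l]
    rw [this]
  -- discrete orthonormality via Gaussian quadrature
  have hD : ∀ i i' : Fin k,
      ∑ l : Fin k, lam l * ((φ i.val).eval (θ l) * (φ i'.val).eval (θ l))
        = if i = i' then 1 else 0 := by
    intro i i'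
    have hdegmul : (φ i.val * φ i'.val).degree < ((2 * k : ℕ) : WithBot ℕ) := by
      refine lt_of_le_of_lt (degree_mul_le _ _) ?_
      calc (φ i.val).degree + (φ i'.val).degree
          ≤ ((k - 1 : ℕ) : WithBot ℕ) + ((k - 1 : ℕ) : WithBot ℕ) :=
            add_le_add (hφdegle i) (hφdegle i')
        _ = (((k - 1) + (k - 1) : ℕ) : WithBot ℕ) := by push_cast; ring
        _ < ((2 * k : ℕ) : WithBot ℕ) := by
            exact_mod_cast (by omega : (k - 1) + (k - 1) < 2 * k)
    have h1 := exact_high _ hdegmul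
    rw [hmul_one, hNorm] at h1
    rw [h1]
    exact Finset.sum_congr rfl fun l _ => by rw [eval_mul]; ring
  -- matrix argument
  set B : Matrix (Fin k) (Fin k) ℝ := Matrix.of fun i l => (φ i.val).eval (θ l) with hB
  have hBD : B * (Matrix.diagonal lam * B.transpose) = 1 := by
    ext i i'
    rw [Matrix.mul_apply, Matrix.one_apply]
    have h2 : ∀ l : Fin k, (Matrix.diagonal lam * B.transpose) l i'
        = lam l * (φ i'.val).eval (θ l) := fun l => by
      rw [Matrix.diagonal_mul, Matrix.transpose_apply, hB]; rfl
    calc ∑ l : Fin k, B i l * (Matrix.diagonal lam * B.transpose) l i'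
        = ∑ l : Fin k, lam l * ((φ i.val).eval (θ l) * (φ i'.val).eval (θ l)) := by
          refine Finset.sum_congr rfl fun l _ => ?_
          rw [h2 l]
          simp only [hB, Matrix.of_apply]
          ring
      _ = _ := by rw [hD i i']
  have hDB : (Matrix.diagonal lam * B.transpose) * B = 1 := mul_eq_one_comm.mp hBD
  have hK : ∀ l l' : Fin k,
      lam l * ∑ i : Fin k, (φ i.val).eval (θ l) * (φ i.val).eval (θ l')
        = if l = l' then 1 else 0 := by
    intro l l'
    have h3 := congrFun (congrFun hDB l) l'
    rw [Matrix.mul_apply, Matrix.one_apply] at h3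
    rw [← h3, Finset.mul_sum]
    refine Finset.sum_congr rfl fun i _ => ?_
    rw [Matrix.diagonal_mul, Matrix.transpose_apply]
    simp only [hB, Matrix.of_apply]
    ring
  -- the Christoffel weights coincide with w
  have hlamw : ∀ l : Fin k, lam l = w l := by
    intro l
    have h4 := hK l l
    rw [if_pos rfl] at h4
    have h5 : lam l * ∑ i : Fin k, (φ i.val).eval (θ l) ^ 2 = 1 := by
      rw [← h4]
      congr 1
      exact Finset.sum_congr rfl fun i _ => pow_two _
    rw [hw l]
    exact eq_inv_of_mul_eq_one_right (by rw [mul_comm]; exact h5)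
  -- polynomial identity
  have hgdegk : g.degree < ((k : ℕ) : WithBot ℕ) :=
    lt_of_le_of_lt hg (by exact_mod_cast Nat.sub_lt hk1 one_pos)
  set P : ℝ[X] := ∑ i : Fin k, Polynomial.C (ghat i) * φ i.val with hP
  have hPdeg : P.degree < ((k : ℕ) : WithBot ℕ) := by
    refine lt_of_le_of_lt (degree_sum_le _ _) ?_
    refine (Finset.sup_lt_iff (WithBot.bot_lt_coe k)).mpr fun i _ => ?_
    refine lt_of_le_of_lt (degree_mul_le _ _) ?_
    calc (Polynomial.C (ghat i)).degree + (φ i.val).degree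
        ≤ 0 + (φ i.val).degree := add_le_add degree_C_le le_rfl
      _ = (φ i.val).degree := zero_add _
      _ < ((k : ℕ) : WithBot ℕ) := hφdegltk i
  have hPθ : ∀ l' : Fin k, P.eval (θ l') = g.eval (θ l') := by
    intro l'
    rw [hP]
    rw [eval_finset_sum]
    simp only [eval_mul, eval_C]
    have step1 : ∀ i : Fin k, ghat i * (φ i.val).eval (θ l')
        = ∑ l : Fin k, w l * g.eval (θ l) * (φ i.val).eval (θ l) * (φ i.val).eval (θ l') := by
      intro i; rw [hghat i, Finset.sum_mul]
    rw [Finset.sum_congr rfl fun i _ => step1 i, Finset.sum_comm]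
    have step2 : ∀ l : Fin k,
        ∑ i : Fin k, w l * g.eval (θ l) * (φ i.val).eval (θ l) * (φ i.val).eval (θ l')
          = g.eval (θ l) * (if l = l' then 1 else 0) := by
      intro l
      rw [← hK l l', ← hlamw l, Finset.mul_sum, Finset.mul_sum]
      exact Finset.sum_congr rfl fun i _ => by rw [hlamw l]; ring
    rw [Finset.sum_congr rfl fun l _ => step2 l]
    simp [Finset.sum_ite_eq]
  have hPg : P = g := by
    refine Polynomial.eq_of_degrees_lt_of_eval_index_eq Finset.univ hθinj.injOn
      (by rwa [hcard]) (by rwa [hcard]) fun l _ => hPθ l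
  intro j
  have h6 := congrArg (Polynomial.eval (f j)) hPg
  rw [hP, eval_finset_sum] at h6
  simp only [eval_mul, eval_C] at h6
  exact h6
end
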